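/- arXiv:2507.11887 — 10 statements merged into one kernel-verified Lean document; each statement's English description precedes it below -/
import Mathlib

section
/- Let a, b ∈ (0,1). Let W be a random variable with values in ℤ_{≥0}, and let Y₁ ~ Geom(a) and Y₂ ~ Geom(b) be such that W, Y₁, Y₂ are mutually independent. Set L = W + Y₁ + Y₂. Then for every integer d ≥ 0 (with the convention P(L ≤ m) = 0 for m < 0), P(W ≤ d) = ( P(L ≤ d) − (a+b)·P(L ≤ d−1) + ab·P(L ≤ d−2) ) / ((1−a)(1−b)). -/
open MeasureTheory ProbabilityTheory

/-- `X` has the geometric distribution with parameter `p` under `P`: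
`P(X = k) = (1-p) p^k` for every `k ∈ ℤ_{≥0}`. -/
def HasGeomLaw {Ω : Type*} [MeasurableSpace Ω] (P : Measure Ω) (X : Ω → ℕ) (p : ℝ) : Prop :=
  ∀ k : ℕ, P {x | X x = k} = ENNReal.ofReal ((1 - p) * p ^ k)

open Finset in
lemma geom_sum_formula {Ω : Type*} [MeasurableSpace Ω] (P : Measure Ω) [IsProbabilityMeasure P]
    {p : ℝ} (hp : p ∈ Set.Ioo (0 : ℝ) 1) (X Y : Ω → ℕ)
    (hX : Measurable X) (hY : Measurable Y)
    (hind : IndepFun X Y P) (hlaw : HasGeomLaw P Y p) (n : ℕ) :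
    (P {x | X x + Y x ≤ n}).toReal
      = ∑ k ∈ Finset.range (n + 1), (1 - p) * p ^ k * (P {x | X x ≤ n - k}).toReal := by
  have hset : {x | X x + Y x ≤ n}
      = ⋃ k ∈ Finset.range (n + 1), ({x | Y x = k} ∩ {x | X x ≤ n - k}) := by
    ext x
    simp only [Set.mem_setOf_eq, Set.mem_iUnion, Finset.mem_range, Set.mem_inter_iff]
    constructor
    · intro h; exact ⟨Y x, by omega, rfl, by omega⟩
    · rintro ⟨k, hk, rfl, h⟩; omega
  have hdisj : (↑(Finset.range (n + 1)) : Set ℕ).PairwiseDisjoint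
      (fun k => ({x | Y x = k} ∩ {x | X x ≤ n - k})) := by
    intro i _ j _ hij
    refine Set.disjoint_left.2 ?_
    rintro x ⟨hxi, -⟩ ⟨hxj, -⟩
    exact hij (hxi.symm.trans hxj)
  have hmeas : ∀ k ∈ Finset.range (n + 1),
      MeasurableSet ({x | Y x = k} ∩ {x | X x ≤ n - k}) := by
    intro k _
    exact (hY (measurableSet_singleton k)).inter (hX (measurableSet_Iic (a := n - k)))
  have hterm : ∀ k, P ({x | Y x = k} ∩ {x | X x ≤ n - k})
      = P {x | X x ≤ n - k} * P {x | Y x = k} := by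
    intro k
    have := hind.measure_inter_preimage_eq_mul (Set.Iic (n - k)) {k}
      measurableSet_Iic (measurableSet_singleton k)
    simpa [Set.preimage, Set.Iic, Set.inter_comm, Set.mem_setOf_eq] using this
  rw [hset, measure_biUnion_finset hdisj hmeas]
  rw [ENNReal.toReal_sum (fun k _ => (measure_lt_top P _).ne)]
  refine Finset.sum_congr rfl fun k _ => ?_
  rw [hterm k, ENNReal.toReal_mul, hlaw k, ENNReal.toReal_ofReal (mul_nonneg (by linarith [hp.2]) (pow_nonneg hp.1.le k)), mul_comm]

/-- Key telescoping step: convolving with a geometric. -/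
lemma geom_step {Ω : Type*} [MeasurableSpace Ω] (P : Measure Ω) [IsProbabilityMeasure P]
    {p : ℝ} (hp : p ∈ Set.Ioo (0 : ℝ) 1) (X Y : Ω → ℕ)
    (hX : Measurable X) (hY : Measurable Y)
    (hind : IndepFun X Y P) (hlaw : HasGeomLaw P Y p) (m : ℤ) :
    (P {x | ((X x + Y x : ℕ) : ℤ) ≤ m}).toReal
      = p * (P {x | ((X x + Y x : ℕ) : ℤ) ≤ m - 1}).toReal
        + (1 - p) * (P {x | ((X x : ℕ) : ℤ) ≤ m}).toReal := by
  rcases lt_or_ge m 0 with hm | hm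
  · have h1 : {x : Ω | ((X x + Y x : ℕ) : ℤ) ≤ m} = ∅ := by
      ext x; simp only [Set.mem_setOf_eq, Set.mem_empty_iff_false, iff_false]; omega
    have h2 : {x : Ω | ((X x + Y x : ℕ) : ℤ) ≤ m - 1} = ∅ := by
      ext x; simp only [Set.mem_setOf_eq, Set.mem_empty_iff_false, iff_false]; omega
    have h3 : {x : Ω | ((X x : ℕ) : ℤ) ≤ m} = ∅ := by
      ext x; simp only [Set.mem_setOf_eq, Set.mem_empty_iff_false, iff_false]; omega
    rw [h1, h2, h3]; simp
  · obtain ⟨n, rfl⟩ : ∃ n : ℕ, m = (n : ℤ) := ⟨m.toNat, (Int.toNat_of_nonneg hm).symm⟩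
    have hXev : ∀ j : ℕ, {x : Ω | ((X x : ℕ) : ℤ) ≤ (j : ℤ)} = {x | X x ≤ j} := by
      intro j; ext x; simp only [Set.mem_setOf_eq]; omega
    have hXYev : ∀ j : ℕ, {x : Ω | ((X x + Y x : ℕ) : ℤ) ≤ (j : ℤ)} = {x | X x + Y x ≤ j} := by
      intro j; ext x; simp only [Set.mem_setOf_eq]; omega
    cases n with
    | zero =>
      have h2 : {x : Ω | ((X x + Y x : ℕ) : ℤ) ≤ ((0:ℕ) : ℤ) - 1} = ∅ := by
        ext x; simp only [Set.mem_setOf_eq, Set.mem_empty_iff_false, iff_false]; omega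
      rw [hXYev 0, hXev 0, h2, geom_sum_formula P hp X Y hX hY hind hlaw 0]
      simp
    | succ n =>
      have h2 : ((n + 1 : ℕ) : ℤ) - 1 = ((n : ℕ) : ℤ) := by push_cast; ring
      rw [h2, hXYev (n + 1), hXYev n, hXev (n + 1),
        geom_sum_formula P hp X Y hX hY hind hlaw (n + 1), geom_sum_formula P hp X Y hX hY hind hlaw n]
      rw [Finset.sum_range_succ' (fun k => (1 - p) * p ^ k * (P {x | X x ≤ n + 1 - k}).toReal)
        (n + 1)]
      rw [Finset.mul_sum]
      have : ∀ i ∈ Finset.range (n + 1),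
          (1 - p) * p ^ (i + 1) * (P {x | X x ≤ n + 1 - (i + 1)}).toReal
            = p * ((1 - p) * p ^ i * (P {x | X x ≤ n - i}).toReal) := by
        intro i hi
        have : n + 1 - (i + 1) = n - i := by omega
        rw [this]; ring
      rw [Finset.sum_congr rfl this]
      simp only [pow_zero, Nat.sub_zero, mul_one]

/-- **Two-parameter shift argument.** If `W` is `ℤ_{≥0}`-valued and `Y₁ ~ Geom(a)`,
`Y₂ ~ Geom(b)` with `W, Y₁, Y₂` mutually independent, then with `L = W + Y₁ + Y₂`,
for every integer `d ≥ 0`,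
`P(W ≤ d) = (P(L ≤ d) − (a+b)·P(L ≤ d−1) + ab·P(L ≤ d−2)) / ((1−a)(1−b))`. -/
theorem shift_argument_two_geometrics
    {Ω : Type*} [MeasurableSpace Ω] (P : Measure Ω) [IsProbabilityMeasure P]
    (a b : ℝ) (ha : a ∈ Set.Ioo (0 : ℝ) 1) (hb : b ∈ Set.Ioo (0 : ℝ) 1)
    (W Y₁ Y₂ : Ω → ℕ)
    (hW : Measurable W) (hY₁ : Measurable Y₁) (hY₂ : Measurable Y₂)
    (hindep : iIndepFun ![W, Y₁, Y₂] P)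
    (hY₁law : HasGeomLaw P Y₁ a) (hY₂law : HasGeomLaw P Y₂ b)
    (d : ℤ) (hd : 0 ≤ d) :
    (P {x | (W x : ℤ) ≤ d}).toReal =
      ((P {x | ((W x + Y₁ x + Y₂ x : ℕ) : ℤ) ≤ d}).toReal
        - (a + b) * (P {x | ((W x + Y₁ x + Y₂ x : ℕ) : ℤ) ≤ d - 1}).toReal
        + a * b * (P {x | ((W x + Y₁ x + Y₂ x : ℕ) : ℤ) ≤ d - 2}).toReal)
      / ((1 - a) * (1 - b)) := by
  have hmeas : ∀ i, Measurable (![W, Y₁, Y₂] i) := by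
    intro i; fin_cases i <;> simpa using ‹_›
  have hind01 : IndepFun W Y₁ P := hindep.indepFun (i := 0) (j := 1) (by decide)
  have hind2 : IndepFun (W + Y₁) Y₂ P := by
    have := hindep.indepFun_add_left hmeas 0 1 2 (by decide) (by decide)
    simpa using this
  -- abbreviations
  set g : ℤ → ℝ := fun m => (P {x | (((W + Y₁) x + Y₂ x : ℕ) : ℤ) ≤ m}).toReal with hg
  have step2 : ∀ m : ℤ, g m = b * g (m - 1)
      + (1 - b) * (P {x | (((W + Y₁) x : ℕ) : ℤ) ≤ m}).toReal :=
    fun m => geom_step P hb (W + Y₁) Y₂ (hW.add hY₁) hY₂ hind2 hY₂law m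
  have step1 : ∀ m : ℤ, (P {x | ((W x + Y₁ x : ℕ) : ℤ) ≤ m}).toReal
      = a * (P {x | ((W x + Y₁ x : ℕ) : ℤ) ≤ m - 1}).toReal
        + (1 - a) * (P {x | ((W x : ℕ) : ℤ) ≤ m}).toReal :=
    fun m => geom_step P ha W Y₁ hW hY₁ hind01 hY₁law m
  have hgL : ∀ m : ℤ, g m = (P {x | ((W x + Y₁ x + Y₂ x : ℕ) : ℤ) ≤ m}).toReal := by
    intro m; simp only [hg, Pi.add_apply]
  have hWY : ∀ m : ℤ, (P {x | (((W + Y₁) x : ℕ) : ℤ) ≤ m}).toReal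
      = (P {x | ((W x + Y₁ x : ℕ) : ℤ) ≤ m}).toReal := by
    intro m; simp only [Pi.add_apply]
  have key : g d - (a + b) * g (d - 1) + a * b * g (d - 2)
      = (1 - a) * (1 - b) * (P {x | ((W x : ℕ) : ℤ) ≤ d}).toReal := by
    have e1 := step2 d
    have e2 := step2 (d - 1)
    have e3 := step1 d
    have e4 := step1 (d - 1)
    rw [hWY] at e1 e2
    have h21 : d - 1 - 1 = d - 2 := by ring
    rw [h21] at e2
    linear_combination e1 - a * e2 + (1 - b) * e3
  have hW' : {x : Ω | ((W x : ℕ) : ℤ) ≤ d} = {x : Ω | (W x : ℤ) ≤ d} := rfl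
  rw [hW'] at key
  have hdenom : (1 - a) * (1 - b) ≠ 0 := by
    have := ha.2; have := hb.2
    have h1 : (1 : ℝ) - a ≠ 0 := by linarith
    have h2 : (1 : ℝ) - b ≠ 0 := by linarith
    exact mul_ne_zero h1 h2
  rw [← hgL d, ← hgL (d - 1), ← hgL (d - 2), key, mul_div_cancel_left₀ _ hdenom]
end

section
/- Let r ∈ (0,1) and let ρ be a real number with r < ρ < 1/r. Then for every integer m, the contour integral (1/(2πi)) ∮_{|z|=ρ} z^{m−1}(1−z²)/((z−r)(1−rz)) dz over the positively oriented circle of radius ρ centered at 0 equals sgn(m)·r^{|m|−1}; that is, it equals r^{m−1} if m ≥ 1, equals 0 if m = 0, and equals −r^{−m−1} if m ≤ −1. -/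
open Complex Metric

-- integrability of z^k on circle
lemma czpow {ρ : ℝ} (hρ : 0 < ρ) (k : ℤ) : CircleIntegrable (fun z : ℂ => z ^ k) 0 ρ := by
  have : CircleIntegrable (fun z : ℂ => (z - 0) ^ k) 0 ρ := by
    rw [circleIntegrable_sub_zpow_iff]
    right; right
    simp [abs_of_pos hρ]; exact hρ.ne
  simpa using this

lemma cmulinv {ρ : ℝ} (hρ : 0 < ρ) (k : ℤ) (a : ℂ) (ha : ‖a‖ ≠ ρ) :
    CircleIntegrable (fun z : ℂ => z ^ k * (z - a)⁻¹) 0 ρ := by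
  apply ContinuousOn.circleIntegrable hρ.le
  have h1 : ∀ z ∈ sphere (0:ℂ) ρ, z ≠ 0 := by
    intro z hz
    rw [mem_sphere_zero_iff_norm] at hz
    intro h; rw [h] at hz; simp at hz; exact hρ.ne' hz.symm
  have h2 : ∀ z ∈ sphere (0:ℂ) ρ, z - a ≠ 0 := by
    intro z hz
    rw [mem_sphere_zero_iff_norm] at hz
    intro h; rw [sub_eq_zero] at h; subst h; exact ha hz
  exact (continuousOn_id.zpow₀ k fun z hz => Or.inl (h1 z hz)).mul
    ((continuousOn_id.sub continuousOn_const).inv₀ h2)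

lemma cint_add {f g : ℂ → ℂ} {c : ℂ} {R : ℝ} (hf : CircleIntegrable f c R)
    (hg : CircleIntegrable g c R) :
    (∮ z in C(c, R), (f z + g z)) = (∮ z in C(c, R), f z) + ∮ z in C(c, R), g z := by
  simp only [circleIntegral, smul_add, intervalIntegral.integral_add hf.out hg.out]

lemma Jval {ρ : ℝ} (hρ : 0 < ρ) (k : ℤ) :
    (∮ z in C(0, ρ), z ^ k) = if k = -1 then (2 * Real.pi * I) else 0 := by
  split_ifs with h
  · subst h
    have h0 : (0:ℂ) ∈ ball (0:ℂ) ρ := by simpa using hρ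
    have := circleIntegral.integral_sub_inv_of_mem_ball h0
    simpa [zpow_neg_one] using this
  · simpa using circleIntegral.integral_sub_zpow_of_ne h 0 0 ρ

lemma posin {ρ : ℝ} (hρ : 0 < ρ) (k : ℕ) (a : ℂ) (ha : ‖a‖ < ρ) :
    (∮ z in C(0, ρ), z ^ (k : ℤ) * (z - a)⁻¹) = (2 * Real.pi * I) * a ^ k := by
  have hw : a ∈ ball (0:ℂ) ρ := by simpa using ha
  have hd : DiffContOnCl ℂ (fun z : ℂ => z ^ k) (ball (0:ℂ) ρ) :=
    (differentiable_pow k).diffContOnCl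
  have := hd.circleIntegral_sub_inv_smul hw
  simp only [smul_eq_mul] at this
  rw [← this]
  refine circleIntegral.integral_congr hρ.le fun z hz => ?_
  simp [mul_comm, zpow_natCast]

lemma posout {ρ : ℝ} (hρ : 0 < ρ) (k : ℕ) (b : ℂ) (hb : ρ < ‖b‖) :
    (∮ z in C(0, ρ), z ^ (k : ℤ) * (z - b)⁻¹) = 0 := by
  apply circleIntegral_eq_zero_of_differentiable_on_off_countable hρ.le Set.countable_empty
    (s := ∅)
  · have h2 : ∀ z ∈ closedBall (0:ℂ) ρ, z - b ≠ 0 := by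
      intro z hz
      rw [mem_closedBall_zero_iff] at hz
      intro h; rw [sub_eq_zero] at h; subst h
      exact absurd hz (not_le.mpr hb)
    exact ((continuousOn_id.zpow₀ (k:ℤ) fun z _ => Or.inr (by positivity)).mul
      ((continuousOn_id.sub continuousOn_const).inv₀ h2))
  · intro z hz
    have hzb : z - b ≠ 0 := by
      rw [sub_ne_zero]
      intro h; subst h
      exact absurd (mem_ball_zero_iff.mp hz.1).le (not_le.mpr hb)
    exact (differentiableAt_zpow.mpr (Or.inr (by positivity))).mul ((differentiableAt_id.sub_const b).inv hzb)

lemma step {ρ : ℝ} (hρ : 0 < ρ) (k : ℤ) (a : ℂ) (ha : a ≠ 0) (haρ : ‖a‖ ≠ ρ) :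
    (∮ z in C(0, ρ), z ^ k * (z - a)⁻¹) =
      a⁻¹ * ((∮ z in C(0, ρ), z ^ (k + 1) * (z - a)⁻¹) - ∮ z in C(0, ρ), z ^ k) := by
  rw [← circleIntegral.integral_sub (cmulinv hρ (k+1) a haρ) (czpow hρ k),
    ← circleIntegral.integral_const_mul]
  refine circleIntegral.integral_congr hρ.le fun z hz => ?_
  rw [mem_sphere_zero_iff_norm] at hz
  have hz0 : z ≠ 0 := by
    intro h; rw [h] at hz; simp at hz; exact hρ.ne' hz.symm
  have hza : z - a ≠ 0 := by
    rw [sub_ne_zero]; intro h; subst h; exact haρ hz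
  rw [zpow_add_one₀ hz0]
  field_simp
  ring

lemma negval {ρ : ℝ} (hρ : 0 < ρ) (a : ℂ) (ha : a ≠ 0) (haρ : ‖a‖ ≠ ρ) (n : ℕ) :
    (∮ z in C(0, ρ), z ^ (-1 - (n : ℤ)) * (z - a)⁻¹) =
      if ‖a‖ < ρ then 0 else -(2 * Real.pi * I) * a ^ (-1 - (n : ℤ)) := by
  induction n with
  | zero =>
    have h := step hρ (-1) a ha haρ
    simp only [neg_add_cancel] at h
    have h0 : (∮ z in C(0, ρ), z ^ (0:ℤ) * (z - a)⁻¹) =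
        if ‖a‖ < ρ then (2 * Real.pi * I) else 0 := by
      split_ifs with hin
      · simpa using posin hρ 0 a hin
      · have hout : ρ < ‖a‖ := lt_of_le_of_ne (not_lt.mp hin) (Ne.symm haρ)
        simpa using posout hρ 0 a hout
    rw [show (-1 - (0:ℕ) : ℤ) = -1 by norm_num, h, h0, Jval hρ (-1), if_pos rfl]
    split_ifs with hin
    · simp
    · rw [zpow_neg_one]; ring
  | succ n ih =>
    have h := step hρ (-1 - (n+1 : ℕ)) a ha haρ
    have he : (-1 - (n+1 : ℕ) : ℤ) + 1 = -1 - (n : ℕ) := by push_cast; ring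
    rw [he] at h
    have hne : (-1 - ((n+1:ℕ):ℤ)) ≠ -1 := by push_cast; omega
    rw [h, ih, Jval hρ, if_neg hne]
    split_ifs with hin
    · simp
    · rw [sub_zero,
        show ((-1:ℤ) - (n:ℕ)) = (-1 - ((n+1:ℕ):ℤ)) + 1 by push_cast; ring, zpow_add_one₀ ha]
      field_simp

lemma allk {ρ : ℝ} (hρ : 0 < ρ) (k : ℤ) (a : ℂ) (ha : a ≠ 0) (haρ : ‖a‖ ≠ ρ) :
    (∮ z in C(0, ρ), z ^ k * (z - a)⁻¹) =
      if ‖a‖ < ρ then (if 0 ≤ k then (2 * Real.pi * I) * a ^ k else 0)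
      else (if 0 ≤ k then 0 else -(2 * Real.pi * I) * a ^ k) := by
  rcases le_or_gt 0 k with hk | hk
  · obtain ⟨n, rfl⟩ : ∃ n : ℕ, k = (n : ℤ) := ⟨k.toNat, (Int.toNat_of_nonneg hk).symm⟩
    rw [if_pos hk, if_pos hk]
    split_ifs with hin
    · exact posin hρ n a hin
    · exact posout hρ n a (lt_of_le_of_ne (not_lt.mp hin) (Ne.symm haρ))
  · obtain ⟨n, rfl⟩ : ∃ n : ℕ, k = -1 - (n : ℤ) :=
      ⟨(-1 - k).toNat, by omega⟩
    rw [if_neg (not_le.mpr hk), if_neg (not_le.mpr hk)]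
    exact negval hρ a ha haρ n

lemma decomp_pt (a b z w : ℂ) (hab : a * b = 1) (hza : z - a ≠ 0)
    (h1az : 1 - a * z ≠ 0) :
    w * (1 - z ^ 2) / ((z - a) * (1 - a * z)) =
      w * (z - a)⁻¹ + ((a⁻¹) ^ 2 * (w * (z - b)⁻¹) + a⁻¹ * w) := by
  have ha : a ≠ 0 := left_ne_zero_of_mul_eq_one hab
  have h3 : a * (z - b) = -(1 - a * z) := by linear_combination -hab
  have h2 : (z - b) * (-(a * (1 - a * z)⁻¹)) = 1 := by
    rw [show (z - b) * (-(a * (1 - a * z)⁻¹)) = -(a * (z - b)) * (1 - a * z)⁻¹ by ring, h3,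
      neg_neg, mul_inv_cancel₀ h1az]
  have hzb' : (z - b)⁻¹ = -(a * (1 - a * z)⁻¹) := inv_eq_of_mul_eq_one_right h2
  have hbinv : a⁻¹ = b := inv_eq_of_mul_eq_one_right hab
  have hu : (z - a) * (z - a)⁻¹ = 1 := mul_inv_cancel₀ hza
  have hv : (1 - a * z) * (1 - a * z)⁻¹ = 1 := mul_inv_cancel₀ h1az
  rw [hbinv, hzb', div_eq_iff (mul_ne_zero hza h1az)]
  linear_combination (-(w * (1 - a * z))) * hu + (b ^ 2 * a * w * (z - a)) * hv +
    (b * w * (z - a) + w * z * (z - a)) * hab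


lemma cint_cmul {f : ℂ → ℂ} {c : ℂ} {R : ℝ} (a : ℂ) (hf : CircleIntegrable f c R) :
    CircleIntegrable (fun z => a * f z) c R :=
  IntervalIntegrable.const_mul hf a

set_option maxHeartbeats 1000000 in
/-- **Contour-integral evaluation of the kernel entry `E`.** For `0 < r < 1` and a radius
`ρ ∈ (r, 1/r)`, the integral `(2πi)⁻¹ ∮_{|z|=ρ} z^{m−1}(1−z²)/((z−r)(1−rz)) dz` equals
`sgn(m)·r^{|m|−1}` for every integer `m`. -/
theorem contour_integral_kernel_E
    (r ρ : ℝ) (hr : r ∈ Set.Ioo (0 : ℝ) 1) (hρ₁ : r < ρ) (hρ₂ : ρ < 1 / r) (m : ℤ) :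
    (1 / (2 * Real.pi * Complex.I)) *
        (∮ z in C(0, ρ), z ^ (m - 1) * (1 - z ^ 2) / ((z - (r : ℂ)) * (1 - (r : ℂ) * z))) =
      (m.sign : ℂ) * (r : ℂ) ^ (|m| - 1) := by
  obtain ⟨hr0, hr1⟩ := hr
  have hρ : 0 < ρ := hr0.trans hρ₁
  set a : ℂ := (r : ℂ) with ha_def
  have ha : a ≠ 0 := by simp [ha_def, hr0.ne']
  have habs : ‖a‖ = r := by simp [ha_def, abs_of_pos hr0]
  set b : ℂ := a⁻¹ with hb_def
  have hab : a * b = 1 := mul_inv_cancel₀ ha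
  have hb : b ≠ 0 := inv_ne_zero ha
  have hbabs : ‖b‖ = r⁻¹ := by simp [hb_def, habs]
  have hain : ‖a‖ < ρ := by rw [habs]; exact hρ₁
  have hbout : ρ < ‖b‖ := by
    rw [hbabs]; rw [one_div] at hρ₂; exact hρ₂
  have haρ : ‖a‖ ≠ ρ := ne_of_lt hain
  have hbρ : ‖b‖ ≠ ρ := (ne_of_lt hbout).symm
  have hdecomp : (∮ z in C(0, ρ), z ^ (m - 1) * (1 - z ^ 2) / ((z - a) * (1 - a * z))) =
      (∮ z in C(0, ρ), (z ^ (m - 1) * (z - a)⁻¹ +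
        ((a⁻¹) ^ 2 * (z ^ (m - 1) * (z - b)⁻¹) + a⁻¹ * z ^ (m - 1)))) := by
    refine circleIntegral.integral_congr hρ.le fun z hz => ?_
    rw [mem_sphere_zero_iff_norm] at hz
    have hza : z - a ≠ 0 := by
      rw [sub_ne_zero]; intro h; subst h; exact haρ hz
    have h1az : 1 - a * z ≠ 0 := by
      intro h
      have hzb : z = b := by
        rw [hb_def]
        field_simp
        linear_combination -h
      rw [hzb] at hz
      exact hbρ hz
    exact decomp_pt a b z (z ^ (m - 1)) hab hza h1az
  have hg2 : CircleIntegrable (fun z : ℂ => a⁻¹ ^ 2 * (z ^ (m-1) * (z - b)⁻¹)) 0 ρ :=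
    cint_cmul _ (cmulinv hρ (m-1) b hbρ)
  have hg3 : CircleIntegrable (fun z : ℂ => a⁻¹ * z ^ (m-1)) 0 ρ :=
    cint_cmul _ (czpow hρ (m-1))
  have hg23 : CircleIntegrable (fun z : ℂ => a⁻¹ ^ 2 * (z ^ (m-1) * (z - b)⁻¹)
      + a⁻¹ * z ^ (m-1)) 0 ρ := hg2.add hg3
  clear_value a
  rw [hdecomp, cint_add (cmulinv hρ (m-1) a haρ) hg23, cint_add hg2 hg3,
    circleIntegral.integral_const_mul, circleIntegral.integral_const_mul,
    allk hρ (m-1) a ha haρ, allk hρ (m-1) b hb hbρ, Jval hρ (m-1),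
    if_pos hain, if_neg (not_lt.mpr hbout.le)]
  have hpi : (2 * (Real.pi : ℂ) * I) ≠ 0 := by
    simp [Real.pi_ne_zero, I_ne_zero]
  rcases lt_trichotomy m 0 with hm | hm | hm
  · -- m < 0
    have h1 : ¬ ((0:ℤ) ≤ m - 1) := by omega
    have h2 : m - 1 ≠ -1 := by omega
    rw [if_neg h1, if_neg h1, if_neg h2]
    have hsign : (m.sign : ℂ) = -1 := by
      rw [Int.sign_eq_neg_one_of_neg hm]; simp
    have habs' : |m| = -m := abs_of_neg hm
    rw [hsign, habs']
    have hbpow : b ^ (m - 1) = a ^ (1 - m) := by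
      rw [← inv_eq_of_mul_eq_one_right hab, inv_zpow, ← zpow_neg]; ring_nf
    rw [hbpow, show (1 : ℤ) - m = (-m - 1) + 2 by ring, zpow_add₀ ha]
    field_simp
    ring_nf
  · -- m = 0
    subst hm
    have hbpow : b ^ ((0:ℤ) - 1) = a := by
      rw [← inv_eq_of_mul_eq_one_right hab, inv_zpow, ← zpow_neg]
      norm_num
    norm_num [hbpow]
    have hinv : a * a⁻¹ = 1 := mul_inv_cancel₀ ha
    field_simp
    linear_combination (2 * (Real.pi:ℂ) * I) * hab
  · -- m > 0
    have h1 : (0 : ℤ) ≤ m - 1 := by omega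
    rw [if_pos h1, if_pos h1]
    have hsign : (m.sign : ℂ) = 1 := by
      rw [Int.sign_eq_one_of_pos hm]; simp
    have habs' : |m| = m := abs_of_pos hm
    rw [hsign, habs', one_mul, if_neg (show m - 1 ≠ -1 by omega)]
    field_simp
    ring
end

section
/- Let t, s, r > 0 with ts < 1, tr < 1 and sr < 1, and let d be a nonnegative integer. Then the double series Σ_{k=d+1}^{∞} Σ_{ℓ=d+1}^{∞} sgn(k−ℓ)·r^{|k−ℓ|−1}·t^{k+1}·s^{ℓ+1} converges absolutely and its sum equals (t−s)·(ts)^{d+2} / ((1−ts)(1−tr)(1−sr)). -/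
private lemma geo2 (x y c : ℝ) (hx0 : 0 ≤ x) (hx1 : x < 1) (hy0 : 0 ≤ y) (hy1 : y < 1) :
    HasSum (fun p : ℕ × ℕ => c * (x ^ p.1 * y ^ p.2)) (c * ((1 - x)⁻¹ * (1 - y)⁻¹)) := by
  have hx := hasSum_geometric_of_lt_one hx0 hx1
  have hy := hasSum_geometric_of_lt_one hy0 hy1
  have hsum : Summable fun p : ℕ × ℕ => x ^ p.1 * y ^ p.2 := by
    apply summable_mul_of_summable_norm (f := fun n : ℕ => x ^ n) (g := fun n : ℕ => y ^ n)
    · simpa [abs_of_nonneg (pow_nonneg hx0 _)] using hx.summable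
    · simpa [abs_of_nonneg (pow_nonneg hy0 _)] using hy.summable
  exact (hx.mul hy hsum).mul_left c

/-- **Evaluation of the pairing `⟨f^t|E|f^s⟩`.** For `t, s, r > 0` with `ts < 1`, `tr < 1`,
`sr < 1` and any integer `d ≥ 0`, the double series
`Σ_{k=d+1}^∞ Σ_{ℓ=d+1}^∞ sgn(k−ℓ)·r^{|k−ℓ|−1}·t^{k+1}·s^{ℓ+1}`
converges absolutely (for real series, `HasSum` over `ℕ × ℕ` is unconditional, hence
absolute, convergence) with sum `(t−s)·(ts)^{d+2}/((1−ts)(1−tr)(1−sr))`. -/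
theorem double_series_fE_pairing
    (t s r : ℝ) (ht : 0 < t) (hs : 0 < s) (hr : 0 < r)
    (hts : t * s < 1) (htr : t * r < 1) (hsr : s * r < 1) (d : ℕ) :
    HasSum
      (fun p : ℕ × ℕ =>
        (((d + 1 + p.1 : ℤ) - (d + 1 + p.2 : ℤ)).sign : ℝ) *
          r ^ (|(d + 1 + p.1 : ℤ) - (d + 1 + p.2 : ℤ)| - 1) *
          t ^ (d + 1 + p.1 + 1) * s ^ (d + 1 + p.2 + 1))
      ((t - s) * (t * s) ^ (d + 2) / ((1 - t * s) * (1 - t * r) * (1 - s * r))) := by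
  set f1 : ℕ × ℕ → ℝ := fun p =>
    if p.2 < p.1 then r ^ (p.1 - p.2 - 1) * t ^ (d + 1 + p.1 + 1) * s ^ (d + 1 + p.2 + 1) else 0
    with hf1
  set f2 : ℕ × ℕ → ℝ := fun p =>
    if p.1 < p.2 then r ^ (p.2 - p.1 - 1) * t ^ (d + 1 + p.1 + 1) * s ^ (d + 1 + p.2 + 1) else 0
    with hf2
  have hts0 : (0:ℝ) ≤ t * s := by positivity
  have htr0 : (0:ℝ) ≤ t * r := by positivity
  have hsr0 : (0:ℝ) ≤ s * r := by positivity
  -- sum of f1 (part with k > ℓ)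
  have h1 : HasSum f1 (t * (t * s) ^ (d + 2) * ((1 - t * s)⁻¹ * (1 - t * r)⁻¹)) := by
    have he : Function.Injective (fun q : ℕ × ℕ => (q.1 + q.2 + 1, q.1)) := by
      intro a b hab
      simp only [Prod.mk.injEq] at hab
      obtain ⟨hab1, hab2⟩ := hab
      exact Prod.ext hab2 (by omega)
    rw [← Function.Injective.hasSum_iff he]
    · have key := geo2 (t * s) (t * r) (t * (t * s) ^ (d + 2)) hts0 hts htr0 htr
      convert key using 2 with q
      simp only [Function.comp_apply, hf1]
      rw [if_pos (by omega : (q.1 + q.2 + 1, q.1).2 < (q.1 + q.2 + 1, q.1).1)]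
      have hq : (q.1 + q.2 + 1, q.1).1 - (q.1 + q.2 + 1, q.1).2 - 1 = q.2 := by omega
      rw [hq]
      simp only [mul_pow]
      ring
    · rintro ⟨a, b⟩ hp
      rcases Nat.lt_or_ge b a with h | h
      · exfalso
        refine hp ⟨(b, a - b - 1), ?_⟩
        have : b + (a - b - 1) + 1 = a := by omega
        simp [this]
      · simp only [hf1]
        rw [if_neg (by omega)]
  -- sum of f2 (part with k < ℓ)
  have h2 : HasSum f2 (s * (t * s) ^ (d + 2) * ((1 - t * s)⁻¹ * (1 - s * r)⁻¹)) := by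
    have he : Function.Injective (fun q : ℕ × ℕ => (q.1, q.1 + q.2 + 1)) := by
      intro a b hab
      simp only [Prod.mk.injEq] at hab
      obtain ⟨hab1, hab2⟩ := hab
      exact Prod.ext hab1 (by omega)
    rw [← Function.Injective.hasSum_iff he]
    · have key := geo2 (t * s) (s * r) (s * (t * s) ^ (d + 2)) hts0 hts hsr0 hsr
      convert key using 2 with q
      simp only [Function.comp_apply, hf2]
      rw [if_pos (by omega : (q.1, q.1 + q.2 + 1).1 < (q.1, q.1 + q.2 + 1).2)]
      have hq : (q.1, q.1 + q.2 + 1).2 - (q.1, q.1 + q.2 + 1).1 - 1 = q.2 := by omega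
      rw [hq]
      simp only [mul_pow]
      ring
    · rintro ⟨a, b⟩ hp
      rcases Nat.lt_or_ge a b with h | h
      · exfalso
        refine hp ⟨(a, b - a - 1), ?_⟩
        have : a + (b - a - 1) + 1 = b := by omega
        simp [this]
      · simp only [hf2]
        rw [if_neg (by omega)]
  have hsub := h1.sub h2
  have heq : (fun p : ℕ × ℕ =>
        (((d + 1 + p.1 : ℤ) - (d + 1 + p.2 : ℤ)).sign : ℝ) *
          r ^ (|(d + 1 + p.1 : ℤ) - (d + 1 + p.2 : ℤ)| - 1) *
          t ^ (d + 1 + p.1 + 1) * s ^ (d + 1 + p.2 + 1)) = fun p => f1 p - f2 p := by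
    funext p
    obtain ⟨a, b⟩ := p
    have hd : ((d : ℤ) + 1 + a) - ((d : ℤ) + 1 + b) = (a : ℤ) - (b : ℤ) := by ring
    simp only [hf1, hf2]
    rw [hd]
    rcases lt_trichotomy a b with h | h | h
    · have hlt : (a : ℤ) - (b : ℤ) < 0 := by omega
      rw [if_neg (by omega), if_pos h]
      have hs1 : ((a:ℤ) - b).sign = -1 := Int.sign_eq_neg_one_of_neg hlt
      have habs : |(a:ℤ) - b| - 1 = ((b - a - 1 : ℕ) : ℤ) := by
        rw [abs_of_neg hlt]; omega
      rw [hs1, habs, zpow_natCast]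
      push_cast
      ring
    · subst h
      simp
    · have hlt : (0:ℤ) < (a : ℤ) - (b : ℤ) := by omega
      rw [if_pos h, if_neg (by omega)]
      have hs1 : ((a:ℤ) - b).sign = 1 := Int.sign_eq_one_of_pos hlt
      have habs : |(a:ℤ) - b| - 1 = ((a - b - 1 : ℕ) : ℤ) := by
        rw [abs_of_pos hlt]; omega
      rw [hs1, habs, zpow_natCast]
      push_cast
      ring
  rw [heq]
  convert hsub using 1
  have h1' : (1 : ℝ) - t * s ≠ 0 := by nlinarith
  have h2' : (1 : ℝ) - t * r ≠ 0 := by nlinarith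
  have h3' : (1 : ℝ) - s * r ≠ 0 := by nlinarith
  case e'_6 =>
    have hB : (1 - t * r) * (1 - t * r)⁻¹ = 1 := mul_inv_cancel₀ (by nlinarith)
    have hC : (1 - s * r) * (1 - s * r)⁻¹ = 1 := mul_inv_cancel₀ (by nlinarith)
    rw [div_eq_mul_inv, mul_inv, mul_inv]
    linear_combination (t * (t * s) ^ (d + 2) * (1 - t * s)⁻¹ * (1 - t * r)⁻¹) * hC - (s * (t * s) ^ (d + 2) * (1 - t * s)⁻¹ * (1 - s * r)⁻¹) * hB
  rfl
end

section
/- Let r, s > 0 with rs < 1 and r ≠ s, and let d, k be integers with k ≥ d+1 ≥ 1. Then the series Σ_{ℓ=d+1}^{∞} sgn(k−ℓ)·r^{|k−ℓ|−1}·s^{ℓ} converges absolutely and its sum equals (s^{d+1}·r^{k−d−1} − s^{k})/(r−s) − s^{k+1}/(1−rs). -/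
/-- **Action of the kernel `E` on a geometric function.** For `r, s > 0` with `rs < 1` and
`r ≠ s`, and integers `k ≥ d+1 ≥ 1`, the series `Σ_{ℓ=d+1}^∞ sgn(k−ℓ)·r^{|k−ℓ|−1}·s^ℓ`
converges absolutely (in `ℝ`, `HasSum` is unconditional, hence absolute, convergence)
with sum `(s^{d+1}·r^{k−d−1} − s^k)/(r−s) − s^{k+1}/(1−rs)`. -/
theorem series_E_on_geometric
    (r s : ℝ) (hr : 0 < r) (hs : 0 < s) (hrs : r * s < 1) (hne : r ≠ s)
    (d k : ℕ) (hk : d + 1 ≤ k) :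
    HasSum
      (fun j : ℕ =>
        (((k : ℤ) - (d + 1 + j : ℤ)).sign : ℝ) *
          r ^ (|(k : ℤ) - (d + 1 + j : ℤ)| - 1) * s ^ (d + 1 + j))
      ((s ^ (d + 1) * r ^ (k - d - 1) - s ^ k) / (r - s) - s ^ (k + 1) / (1 - r * s)) := by
  set f : ℕ → ℝ := fun j =>
    (((k : ℤ) - (d + 1 + j : ℤ)).sign : ℝ) *
      r ^ (|(k : ℤ) - (d + 1 + j : ℤ)| - 1) * s ^ (d + 1 + j) with hf
  set m := k - (d + 1) with hmdef
  have hk' : k = d + 1 + m := by omega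
  have hrs0 : (0:ℝ) ≤ r * s := by positivity
  have h1 : (1 : ℝ) - r * s ≠ 0 := by nlinarith
  have hne' : s - r ≠ 0 := sub_ne_zero.mpr (Ne.symm hne)
  have hrne : r ≠ 0 := ne_of_gt hr
  -- tail
  have htail0 : HasSum (fun i : ℕ => (r*s)^i) (1 - r*s)⁻¹ :=
    hasSum_geometric_of_lt_one hrs0 hrs
  have heq : ∀ i : ℕ, f (i + (m+1)) = -(s^(k+1) * (r*s)^i) := by
    intro i
    have h2 : (k:ℤ) - ((d:ℤ) + 1 + ((i + (m+1) : ℕ) : ℤ)) = -((i:ℤ)+1) := by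
      push_cast [hk']; ring
    have h3 : |(k:ℤ) - ((d:ℤ) + 1 + ((i + (m+1) : ℕ) : ℤ))| - 1 = (i:ℤ) := by
      rw [h2, abs_neg, abs_of_nonneg (by positivity : (0:ℤ) ≤ (i:ℤ)+1)]; ring
    have h4 : ((k:ℤ) - ((d:ℤ) + 1 + ((i + (m+1) : ℕ) : ℤ))).sign = -1 := by
      rw [h2]; exact Int.sign_eq_neg_one_of_neg (by omega)
    simp only [hf, h3, h4]
    rw [zpow_natCast, show d + 1 + (i + (m+1)) = (k+1) + i from by omega, pow_add, mul_pow]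
    push_cast
    ring
  have htail : HasSum (fun i : ℕ => f (i + (m+1))) (-(s ^ (k+1) * (1 - r*s)⁻¹)) := by
    simp only [heq]
    exact (htail0.mul_left (s ^ (k+1))).neg
  have hsum : HasSum f (-(s ^ (k+1) * (1 - r*s)⁻¹) + ∑ i ∈ Finset.range (m+1), f i) :=
    (hasSum_nat_add_iff (m+1)).1 htail
  have hfm : f m = 0 := by
    have h2 : (k:ℤ) - ((d:ℤ) + 1 + (m : ℤ)) = 0 := by
      have := hk'; push_cast [this]; ring
    simp only [hf, h2, Int.sign_zero, Int.cast_zero, zero_mul]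
  have hterm : ∀ i ∈ Finset.range m, f i = s^(d+1) * (s^i * r^(m-1-i)) := by
    intro i hi
    rw [Finset.mem_range] at hi
    have h2 : (k:ℤ) - ((d:ℤ) + 1 + (i : ℤ)) = ((m:ℤ) - i) := by
      push_cast [hk']; ring
    have h3 : |(k:ℤ) - ((d:ℤ) + 1 + (i : ℤ))| - 1 = ((m - 1 - i : ℕ) : ℤ) := by
      rw [h2, abs_of_pos (by omega : (0:ℤ) < (m:ℤ) - i)]
      omega
    have h4 : ((k:ℤ) - ((d:ℤ) + 1 + (i : ℤ))).sign = 1 := by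
      rw [h2]; exact Int.sign_eq_one_of_pos (by omega)
    simp only [hf, h3, h4, Int.cast_one, one_mul]
    rw [zpow_natCast, pow_add]
    ring
  have hgeom : (∑ i ∈ Finset.range m, (s^i * r^(m-1-i))) * (s - r) = s^m - r^m :=
    geom_sum₂_mul s r m
  have hS : (∑ i ∈ Finset.range m, s^i * r^(m-1-i)) = (r^m - s^m)/(r - s) := by
    rw [eq_div_iff (sub_ne_zero.mpr hne)]
    have : (r - s) = -(s - r) := by ring
    rw [this, mul_neg, hgeom]; ring
  have hfin : ∑ i ∈ Finset.range (m+1), f i = s^(d+1) * ((r^m - s^m)/(r - s)) := by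
    rw [Finset.sum_range_succ, hfm, add_zero, Finset.sum_congr rfl hterm,
      ← Finset.mul_sum, hS]
  rw [hfin] at hsum
  convert hsum using 1
  have hm1 : k - d - 1 = m := by omega
  rw [hm1, hk']
  have hrs' : r - s ≠ 0 := sub_ne_zero.mpr hne
  field_simp
  ring
end

section
/- Fix q̂ ∈ (0,1), an integer N ≥ 2, an integer d ≥ 0, s ∈ (q̂, 1), and r ∈ (0,1/s) with r ≠ s. For x ∈ (q̂, 1/q̂) define H(x) = ((1−q̂/x)/(1−q̂x))^{N−2}. Then, as t tends to 1/s through values t ∈ (q̂, 1/q̂) with t ≠ 1/s, the function Φ(t) = (1/(1−st)) · ( 1 + ( 1 + (1−t²)(1−sr)/((t−s)(t−r)) − (1−tr)(1−s²)/((t−s)(s−r)) ) · (ts)^{d+2}/(H(t)H(s)) ) converges to the limit (d+2) − (N−2)·q̂·(1/s + s − 2q̂)/((1−q̂/s)(1−q̂s)) − (1−r²)·s/((s−r)(1−sr)). -/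
open Filter Topology

private lemma aux_pow (x : ℝ) (hx : x ≠ 0) (n : ℕ) :
    (n : ℝ) * (x⁻¹) ^ (n - 1) * x ^ n = (n : ℝ) * x := by
  cases n with
  | zero => simp
  | succ k =>
    have h : (x⁻¹) ^ k * x ^ (k + 1) = x := by
      rw [pow_succ, ← mul_assoc, ← mul_pow, inv_mul_cancel₀ hx, one_pow, one_mul]
    rw [Nat.add_sub_cancel, mul_assoc, h]

/-- the inner function -/
private noncomputable def Afun (qh s r : ℝ) (N d : ℕ) : ℝ → ℝ := fun t =>
  1 + (1 + (1 - t ^ 2) * (1 - s * r) / ((t - s) * (t - r))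
          - (1 - t * r) * (1 - s ^ 2) / ((t - s) * (s - r))) *
      ((t * s) ^ (d + 2) /
        (((1 - qh / t) / (1 - qh * t)) ^ (N - 2) *
          ((1 - qh / s) / (1 - qh * s)) ^ (N - 2)))

private lemma pref (s t X : ℝ) (hs : s ≠ 0) (ht : t - 1 / s ≠ 0) :
    -(1 / s) * (X / (t - 1 / s)) = 1 / (1 - s * t) * X := by
  have h : 1 - s * t = -s * (t - 1 / s) := by field_simp; ring
  rw [h, div_mul_eq_div_div, div_neg]
  ring

set_option maxHeartbeats 2000000 in
/-- **L'Hôpital-type limit extracting the finite part as `t → 1/s`.** With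
`H(x) = ((1−q̂/x)/(1−q̂x))^{N−2}`, the function
`Φ(t) = (1−st)⁻¹·(1 + (1 + (1−t²)(1−sr)/((t−s)(t−r)) − (1−tr)(1−s²)/((t−s)(s−r)))·(ts)^{d+2}/(H(t)H(s)))`
converges, as `t → 1/s` through `t ∈ (q̂, 1/q̂) \ {1/s}`, to
`(d+2) − (N−2)·q̂·(1/s+s−2q̂)/((1−q̂/s)(1−q̂s)) − (1−r²)·s/((s−r)(1−sr))`. -/
theorem lhopital_limit_finite_part
    (qh : ℝ) (hq : qh ∈ Set.Ioo (0 : ℝ) 1) (N : ℕ) (hN : 2 ≤ N) (d : ℕ) (hd : 0 ≤ d)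
    (s r : ℝ) (hs : s ∈ Set.Ioo qh 1) (hr : r ∈ Set.Ioo (0 : ℝ) (1 / s)) (hrs : r ≠ s) :
    Tendsto
      (fun t : ℝ =>
        (1 / (1 - s * t)) *
          (1 + (1 + (1 - t ^ 2) * (1 - s * r) / ((t - s) * (t - r))
                  - (1 - t * r) * (1 - s ^ 2) / ((t - s) * (s - r))) *
              ((t * s) ^ (d + 2) /
                (((1 - qh / t) / (1 - qh * t)) ^ (N - 2) *
                  ((1 - qh / s) / (1 - qh * s)) ^ (N - 2)))))
      (nhdsWithin (1 / s) (Set.Ioo qh (1 / qh) \ {1 / s}))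
      (𝓝 ((d + 2 : ℝ) - (N - 2 : ℝ) * qh * (1 / s + s - 2 * qh) /
            ((1 - qh / s) * (1 - qh * s))
          - (1 - r ^ 2) * s / ((s - r) * (1 - s * r)))) := by
  obtain ⟨hq0, hq1⟩ := hq
  obtain ⟨hqs, hs1⟩ := hs
  obtain ⟨hr0, hrc⟩ := hr
  have hs0 : 0 < s := hq0.trans hqs
  have hsne : s ≠ 0 := hs0.ne'
  have hc1 : (1 : ℝ) < 1 / s := by rw [lt_div_iff₀ hs0]; linarith
  have hcpos : (0 : ℝ) < 1 / s := by positivity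
  have hcne : (1 : ℝ) / s ≠ 0 := hcpos.ne'
  have hscs : s < 1 / s := hs1.trans hc1
  have hcs : (1 : ℝ) / s - s ≠ 0 := sub_ne_zero.mpr hscs.ne'
  have hcr : (1 : ℝ) / s - r ≠ 0 := sub_ne_zero.mpr hrc.ne'
  have hsr : s - r ≠ 0 := sub_ne_zero.mpr hrs.symm
  have hqsd : (0 : ℝ) < 1 - qh / s := by
    have : qh / s < 1 := (div_lt_one hs0).mpr hqs
    linarith
  have hqsm : (0 : ℝ) < 1 - qh * s := by nlinarith
  have hqsdne : (1 : ℝ) - qh / s ≠ 0 := hqsd.ne'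
  have hqsmne : (1 : ℝ) - qh * s ≠ 0 := hqsm.ne'
  have hqcm : (1 : ℝ) - qh * (1 / s) ≠ 0 := by
    rw [mul_one_div]; exact hqsdne
  have hqcd : (1 : ℝ) - qh / (1 / s) ≠ 0 := by
    rw [div_div_eq_mul_div, div_one]; exact hqsmne
  have hgs0 : (1 - qh / s) / (1 - qh * s) ≠ 0 := div_ne_zero hqsdne hqsmne
  have hsrm : (1 : ℝ) - s * r ≠ 0 := by
    have : r * s < 1 := (lt_div_iff₀ hs0).mp hrc
    nlinarith
  -- the value of the inner base at 1/s is the inverse of the one at s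
  have hgqc : (1 - qh / (1 / s)) / (1 - qh * (1 / s))
      = ((1 - qh / s) / (1 - qh * s))⁻¹ := by
    rw [div_div_eq_mul_div, div_one, mul_one_div, inv_div]
  have hprod : ((1 - qh / (1 / s)) / (1 - qh * (1 / s))) ^ (N - 2) *
      ((1 - qh / s) / (1 - qh * s)) ^ (N - 2) = 1 := by
    rw [hgqc, ← mul_pow, inv_mul_cancel₀ hgs0, one_pow]
  have hQne : ((1 - qh / (1 / s)) / (1 - qh * (1 / s))) ^ (N - 2) *
      ((1 - qh / s) / (1 - qh * s)) ^ (N - 2) ≠ 0 := by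
    rw [hprod]; exact one_ne_zero
  have hcs1 : (1 : ℝ) / s * s = 1 := by field_simp
  -- derivative of the bracket B
  have hnum1 : HasDerivAt (fun t : ℝ => (1 - t ^ 2) * (1 - s * r))
      (-(2 * (1 / s)) * (1 - s * r)) (1 / s) := by
    have h := ((hasDerivAt_pow 2 (1 / s)).const_sub 1).mul_const (1 - s * r)
    refine HasDerivAt.congr_deriv h (Eq.symm ?_)
    norm_num
  have hden1 : HasDerivAt (fun t : ℝ => (t - s) * (t - r))
      ((1 / s - r) + (1 / s - s)) (1 / s) := by
    have h := ((hasDerivAt_id (1 / s)).sub_const s).mul ((hasDerivAt_id (1 / s)).sub_const r)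
    refine HasDerivAt.congr_deriv h (Eq.symm ?_)
    simp
  have hden1ne : ((1 : ℝ) / s - s) * (1 / s - r) ≠ 0 := mul_ne_zero hcs hcr
  have hB1 := hnum1.div hden1 hden1ne
  have hnum2 : HasDerivAt (fun t : ℝ => (1 - t * r) * (1 - s ^ 2))
      (-r * (1 - s ^ 2)) (1 / s) := by
    have h := (((hasDerivAt_id (1 / s)).mul_const r).const_sub 1).mul_const (1 - s ^ 2)
    refine HasDerivAt.congr_deriv h (Eq.symm ?_)
    simp
  have hden2 : HasDerivAt (fun t : ℝ => (t - s) * (s - r)) (s - r) (1 / s) := by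
    have h := ((hasDerivAt_id (1 / s)).sub_const s).mul_const (s - r)
    refine HasDerivAt.congr_deriv h (Eq.symm ?_)
    simp
  have hden2ne : ((1 : ℝ) / s - s) * (s - r) ≠ 0 := mul_ne_zero hcs hsr
  have hB2 := hnum2.div hden2 hden2ne
  have hB := (hB1.const_add 1).sub hB2
  -- derivative of P = (t*s)^(d+2)
  have hP : HasDerivAt (fun t : ℝ => (t * s) ^ (d + 2)) (((d : ℝ) + 2) * s) (1 / s) := by
    have h := ((hasDerivAt_id (1 / s)).mul_const s).pow (d + 2)
    refine HasDerivAt.congr_deriv h (Eq.symm ?_)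
    have h21 : d + 2 - 1 = d + 1 := by omega
    rw [h21, id_eq, hcs1, one_pow]
    push_cast
    ring
  -- derivative of the base g(t) = (1-qh/t)/(1-qh t)
  have hu : HasDerivAt (fun t : ℝ => 1 - qh / t) (qh * s ^ 2) (1 / s) := by
    have h := ((hasDerivAt_const (1 / s) qh).div (hasDerivAt_id (1 / s)) hcne).const_sub 1
    refine HasDerivAt.congr_deriv h (Eq.symm ?_)
    rw [id_eq]
    field_simp
    ring
  have hv : HasDerivAt (fun t : ℝ => 1 - qh * t) (-qh) (1 / s) := by
    have h := ((hasDerivAt_id (1 / s)).const_mul qh).const_sub 1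
    refine HasDerivAt.congr_deriv h (Eq.symm ?_)
    simp
  have hgq : HasDerivAt (fun t : ℝ => (1 - qh / t) / (1 - qh * t))
      ((qh * s ^ 2 * (1 - qh / s) + qh * (1 - qh * s)) / (1 - qh / s) ^ 2) (1 / s) := by
    have h := hu.div hv hqcm
    refine HasDerivAt.congr_deriv h (Eq.symm ?_)
    rw [mul_one_div, div_div_eq_mul_div, div_one]
    field_simp
    ring
  -- derivative of Q = g(t)^(N-2) * g(s)^(N-2)
  have hQ : HasDerivAt (fun t : ℝ => ((1 - qh / t) / (1 - qh * t)) ^ (N - 2) *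
        ((1 - qh / s) / (1 - qh * s)) ^ (N - 2))
      (((N - 2 : ℕ) : ℝ) * ((1 - qh / s) / (1 - qh * s)) *
        ((qh * s ^ 2 * (1 - qh / s) + qh * (1 - qh * s)) / (1 - qh / s) ^ 2)) (1 / s) := by
    have h := (hgq.pow (N - 2)).mul_const (((1 - qh / s) / (1 - qh * s)) ^ (N - 2))
    refine HasDerivAt.congr_deriv h (Eq.symm ?_)
    rw [hgqc]
    have key := aux_pow ((1 - qh / s) / (1 - qh * s)) hgs0 (N - 2)
    rw [← key]
    ring
  -- derivative of P/Q
  have hPQ : HasDerivAt (fun t : ℝ => (t * s) ^ (d + 2) /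
        (((1 - qh / t) / (1 - qh * t)) ^ (N - 2) * ((1 - qh / s) / (1 - qh * s)) ^ (N - 2)))
      (((d : ℝ) + 2) * s - ((N - 2 : ℕ) : ℝ) * ((1 - qh / s) / (1 - qh * s)) *
        ((qh * s ^ 2 * (1 - qh / s) + qh * (1 - qh * s)) / (1 - qh / s) ^ 2)) (1 / s) := by
    have h := hP.div hQ hQne
    refine HasDerivAt.congr_deriv h (Eq.symm ?_)
    rw [hprod, hcs1, one_pow]
    ring
  have h1s2 : (1 : ℝ) - s ^ 2 ≠ 0 := by nlinarith
  have hsq : s - qh ≠ 0 := sub_ne_zero.mpr hqs.ne'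
  have e1 : (1 : ℝ) / s - s = (1 - s ^ 2) / s := by field_simp
  have e2 : (1 : ℝ) / s - r = (1 - s * r) / s := by field_simp
  have e4 : 1 - ((1 : ℝ) / s) ^ 2 = -(1 - s ^ 2) / s ^ 2 := by field_simp; ring
  have e5 : 1 - (1 : ℝ) / s * r = (s - r) / s := by field_simp
  -- value of the bracket at 1/s
  have hBc : 1 + (1 - (1 / s) ^ 2) * (1 - s * r) / ((1 / s - s) * (1 / s - r))
      - (1 - 1 / s * r) * (1 - s ^ 2) / ((1 / s - s) * (s - r)) = -1 := by
    rw [e1, e2, e4, e5]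
    field_simp
    ring
  -- value of P/Q at 1/s
  have hPQc : (1 / s * s) ^ (d + 2) /
      (((1 - qh / (1 / s)) / (1 - qh * (1 / s))) ^ (N - 2) *
        ((1 - qh / s) / (1 - qh * s)) ^ (N - 2)) = 1 := by
    rw [hprod, hcs1, one_pow, div_one]
  -- derivative of A
  have hA := (hB.mul hPQ).const_add 1
  -- A(1/s) = 0
  have hAc : Afun qh s r N d (1 / s) = 0 := by
    unfold Afun
    rw [hPQc, hBc]
    ring
  -- the slope of A tends to the derivative on our filter
  have hsub : Set.Ioo qh (1 / qh) \ {1 / s} ⊆ {(1 / s : ℝ)}ᶜ := fun x hx => hx.2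
  have hslope := (hasDerivAt_iff_tendsto_slope.mp hA).mono_left
    (nhdsWithin_mono (1 / s) hsub)
  have hmul := hslope.const_mul (-(1 / s))
  have heq : (fun t : ℝ => -(1 / s) * slope (Afun qh s r N d) (1 / s) t)
      =ᶠ[nhdsWithin (1 / s) (Set.Ioo qh (1 / qh) \ {1 / s})]
      (fun t : ℝ =>
        (1 / (1 - s * t)) *
          (1 + (1 + (1 - t ^ 2) * (1 - s * r) / ((t - s) * (t - r))
                  - (1 - t * r) * (1 - s ^ 2) / ((t - s) * (s - r))) *
              ((t * s) ^ (d + 2) /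
                (((1 - qh / t) / (1 - qh * t)) ^ (N - 2) *
                  ((1 - qh / s) / (1 - qh * s)) ^ (N - 2))))) := by
    filter_upwards [self_mem_nhdsWithin] with t ht
    have htne : t ≠ 1 / s := ht.2
    have htc : t - 1 / s ≠ 0 := sub_ne_zero.mpr htne
    rw [slope_def_field, hAc, sub_zero]
    exact pref s t _ hsne htc
  have hfin := Tendsto.congr' heq hmul
  -- unfold Afun in the statement of hA implicitly: hfin proves the goal up to the limit value
  convert hfin using 2
  simp only [Pi.sub_apply, Pi.div_apply]
  rw [hBc, hPQc, e1, e2, e4, e5]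
  push_cast [Nat.cast_sub hN]
  field_simp
  ring
end

section
/- Fix q̂ ∈ (0,1). The function x ↦ M(1 + x·e^{−iπ/3}) is strictly decreasing on the interval [0, 1). -/
open Complex

/-- Derivative of a real quadratic polynomial. -/
lemma quadDeriv_aux (a b c x : ℝ) :
    HasDerivAt (fun y : ℝ => a + b*y + c*y^2) (b + 2*c*x) x := by
  have h := ((hasDerivAt_const x a).add ((hasDerivAt_id x).const_mul b)).add
      ((hasDerivAt_pow 2 x).const_mul c)
  exact h.congr_deriv (by rw [show (2:ℕ) - 1 = 1 from rfl]; push_cast; ring)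

/-- The real model of the phase function along `τ₁` is strictly decreasing on `[0,1)`. -/
lemma model_strictAnti_aux (q : ℝ) (hq : q ∈ Set.Ioo (0:ℝ) 1) :
    StrictAntiOn (fun x : ℝ => (1/2) * Real.log ((1-q)^2 + (1-q)*x + 1*x^2)
      - (1/2) * Real.log ((1-q)^2 + (-((1-q)*q))*x + q^2*x^2)
      - ((1+q)/(2*(1-q))) * Real.log (1 + 1*x + 1*x^2)) (Set.Ico (0:ℝ) 1) := by
  obtain ⟨hq0, hq1⟩ := hq
  have hs : (0:ℝ) < 1 - q := by linarith
  have hApos : ∀ x : ℝ, 0 < (1-q)^2 + (1-q)*x + 1*x^2 := by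
    intro x; nlinarith [sq_nonneg (x + (1-q)/2), sq_nonneg (1-q)]
  have hBpos : ∀ x : ℝ, 0 < (1-q)^2 + (-((1-q)*q))*x + q^2*x^2 := by
    intro x; nlinarith [sq_nonneg (q*x - (1-q)/2), sq_nonneg (1-q)]
  have hCpos : ∀ x : ℝ, 0 < 1 + 1*x + 1*x^2 := by
    intro x; nlinarith [sq_nonneg (x + 1/2)]
  have hd : ∀ x : ℝ, HasDerivAt (fun x : ℝ => (1/2) * Real.log ((1-q)^2 + (1-q)*x + 1*x^2)
      - (1/2) * Real.log ((1-q)^2 + (-((1-q)*q))*x + q^2*x^2)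
      - ((1+q)/(2*(1-q))) * Real.log (1 + 1*x + 1*x^2))
      ((1/2) * (((1-q) + 2*1*x)/((1-q)^2 + (1-q)*x + 1*x^2))
        - (1/2) * (((-((1-q)*q)) + 2*q^2*x)/((1-q)^2 + (-((1-q)*q))*x + q^2*x^2))
        - ((1+q)/(2*(1-q))) * ((1 + 2*1*x)/(1 + 1*x + 1*x^2))) x := by
    intro x
    exact ((((quadDeriv_aux ((1-q)^2) (1-q) 1 x).log (hApos x).ne').const_mul (1/2)).sub
      (((quadDeriv_aux ((1-q)^2) (-((1-q)*q)) (q^2) x).log (hBpos x).ne').const_mul (1/2))).sub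
      (((quadDeriv_aux 1 1 1 x).log (hCpos x).ne').const_mul ((1+q)/(2*(1-q))))
  apply strictAntiOn_of_deriv_neg (convex_Ico 0 1)
  · exact Continuous.continuousOn (by
      fun_prop (disch := intro x; first | exact (hApos x).ne' | exact (hBpos x).ne' | exact (hCpos x).ne'))
  · intro x hx
    rw [interior_Ico] at hx
    obtain ⟨hx0, hx1⟩ := hx
    rw [(hd x).deriv]
    set A := (1-q)^2 + (1-q)*x + 1*x^2 with hA
    set B := (1-q)^2 + (-((1-q)*q))*x + q^2*x^2 with hB
    set C := 1 + 1*x + 1*x^2 with hC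
    have hA0 := hApos x; have hB0 := hBpos x; have hC0 := hCpos x
    rw [← hA] at hA0; rw [← hB] at hB0; rw [← hC] at hC0
    have h1 : x^2 - 2*x - 2 < 0 := by nlinarith
    have h2 : (0:ℝ) < (1-q)^2 := by positivity
    have hP : (1-q)^2*(x^2-2*x-2) - q*x^2*(1+2*x) < 0 := by
      nlinarith [mul_neg_of_pos_of_neg h2 h1,
        mul_pos hq0 (mul_pos (mul_pos hx0 hx0) (by linarith : (0:ℝ) < 1+2*x))]
    have hN : (1-q)*((1-q) + 2*1*x)*B*C - (1-q)*((-((1-q)*q)) + 2*q^2*x)*A*C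
        - (1+q)*(1 + 2*1*x)*A*B < 0 := by
      have he : (1-q)*((1-q) + 2*1*x)*B*C - (1-q)*((-((1-q)*q)) + 2*q^2*x)*A*C
          - (1+q)*(1 + 2*1*x)*A*B
          = q*(1+q)*x^2 * ((1-q)^2*(x^2-2*x-2) - q*x^2*(1+2*x)) := by
        rw [hA, hB, hC]; ring
      rw [he]
      exact mul_neg_of_pos_of_neg (by positivity) hP
    have heq : (1/2) * (((1-q) + 2*1*x)/A) - (1/2) * (((-((1-q)*q)) + 2*q^2*x)/B)
        - ((1+q)/(2*(1-q))) * ((1 + 2*1*x)/C)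
        = ((1-q)*((1-q) + 2*1*x)*B*C - (1-q)*((-((1-q)*q)) + 2*q^2*x)*A*C
          - (1+q)*(1 + 2*1*x)*A*B) / (2*(1-q)*A*B*C) := by
      field_simp
    rw [heq]
    exact div_neg_of_neg_of_pos hN (by positivity)

/-- The real part of the steepest-descent phase function `h₀` of half-space geometric LPP:
`M(w) = log|1−q̂/w| − log|1−q̂w| − (2q̂/(1−q̂))·log|w|`. -/
noncomputable def phaseRe (qh : ℝ) (w : ℂ) : ℝ :=
  Real.log ‖1 - (qh : ℂ) / w‖ - Real.log ‖1 - (qh : ℂ) * w‖ -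
    (2 * qh / (1 - qh)) * Real.log ‖w‖

lemma omega_re_aux : (Complex.exp (-(Real.pi * Complex.I) / 3)).re = 1/2 := by
  have h : -(↑Real.pi * Complex.I) / 3 = ((-(Real.pi/3) : ℝ) : ℂ) * Complex.I := by
    push_cast; ring
  rw [h, Complex.exp_ofReal_mul_I_re, Real.cos_neg, Real.cos_pi_div_three]

lemma omega_im_aux : (Complex.exp (-(Real.pi * Complex.I) / 3)).im = -(Real.sqrt 3/2) := by
  have h : -(↑Real.pi * Complex.I) / 3 = ((-(Real.pi/3) : ℝ) : ℂ) * Complex.I := by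
    push_cast; ring
  rw [h, Complex.exp_ofReal_mul_I_im, Real.sin_neg, Real.sin_pi_div_three]

/-- Along `τ₁`, the phase function agrees with the real model. -/
lemma phase_eq_aux (q x : ℝ) (hq0 : 0 < q) (hq1 : q < 1) :
    phaseRe q (1 + (x : ℂ) * Complex.exp (-(Real.pi * Complex.I) / 3))
      = (1/2) * Real.log ((1-q)^2 + (1-q)*x + 1*x^2)
      - (1/2) * Real.log ((1-q)^2 + (-((1-q)*q))*x + q^2*x^2)
      - ((1+q)/(2*(1-q))) * Real.log (1 + 1*x + 1*x^2) := by
  have h3 : Real.sqrt 3 ^ 2 = 3 := Real.sq_sqrt (by norm_num)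
  set w : ℂ := 1 + (x : ℂ) * Complex.exp (-(Real.pi * Complex.I) / 3) with hw
  have hApos : 0 < (1-q)^2 + (1-q)*x + 1*x^2 := by
    nlinarith [sq_nonneg (x + (1-q)/2), sq_nonneg (1-q)]
  have hCpos : 0 < 1 + 1*x + 1*x^2 := by nlinarith [sq_nonneg (x + 1/2)]
  have hnC : Complex.normSq w = 1 + 1*x + 1*x^2 := by
    simp [hw, Complex.normSq_apply, omega_re_aux, omega_im_aux]
    nlinarith [h3]
  have hnA : Complex.normSq (w - q) = (1-q)^2 + (1-q)*x + 1*x^2 := by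
    simp [hw, Complex.normSq_apply, omega_re_aux, omega_im_aux]
    nlinarith [h3]
  have hnB : Complex.normSq (1 - (q:ℂ) * w) = (1-q)^2 + (-((1-q)*q))*x + q^2*x^2 := by
    simp [hw, Complex.normSq_apply, omega_re_aux, omega_im_aux]
    nlinarith [h3]
  have hw0 : w ≠ 0 := by
    intro h
    rw [h, Complex.normSq_zero] at hnC
    linarith
  have hwq0 : w - q ≠ 0 := by
    intro h
    rw [h, Complex.normSq_zero] at hnA
    linarith
  have hdiv : 1 - (q:ℂ)/w = (w - q)/w := by field_simp
  have logAbs : ∀ z : ℂ, Real.log ‖z‖ = (1/2) * Real.log (Complex.normSq z) := by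
    intro z
    rw [Complex.norm_def, Real.log_sqrt (Complex.normSq_nonneg z)]
    ring
  rw [phaseRe, hdiv, norm_div,
    Real.log_div (norm_ne_zero_iff.mpr hwq0) (norm_ne_zero_iff.mpr hw0),
    logAbs, logAbs, logAbs, hnA, hnB, hnC]
  have hs : (1:ℝ) - q ≠ 0 := by linarith
  field_simp
  ring

/-- **Steepest descent along the segment `τ₁`.** The map
`x ↦ M(1 + x·e^{−iπ/3})` is strictly decreasing on `[0, 1)`. -/
theorem phaseRe_strictAntiOn_tau1 (qh : ℝ) (hq : qh ∈ Set.Ioo (0 : ℝ) 1) :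
    StrictAntiOn (fun x : ℝ => phaseRe qh (1 + (x : ℂ) * Complex.exp (-(Real.pi * Complex.I) / 3)))
      (Set.Ico (0 : ℝ) 1) := by
  intro a ha b hb hab
  simp only
  rw [phase_eq_aux qh a hq.1 hq.2, phase_eq_aux qh b hq.1 hq.2]
  exact model_strictAnti_aux qh hq ha hb hab
end

section
/- For every q̂ ∈ (0,1), M(3/2 + 2/q̂) < 0; explicitly, (2q̂/(q̂−1))·log(3/2 + 2/q̂) + log(1 − 2q̂²/(4 + 3q̂)) − (1/2)·log(1 + 3q̂ + (9/4)q̂²) < 0. -/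
open Complex

/-- **Negativity of the phase at the rightmost endpoint of the arc `τ₃`.** For every
`q̂ ∈ (0,1)`, `M(3/2 + 2/q̂) < 0`; explicitly,
`(2q̂/(q̂−1))·log(3/2 + 2/q̂) + log(1 − 2q̂²/(4 + 3q̂)) − (1/2)·log(1 + 3q̂ + (9/4)q̂²) < 0`. -/
theorem phaseRe_neg_at_tau3_right (qh : ℝ) (hq : qh ∈ Set.Ioo (0 : ℝ) 1) :
    phaseRe qh (((3 : ℝ) / 2 + 2 / qh : ℝ) : ℂ) < 0 ∧
      (2 * qh / (qh - 1)) * Real.log (3 / 2 + 2 / qh)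
        + Real.log (1 - 2 * qh ^ 2 / (4 + 3 * qh))
        - (1 / 2) * Real.log (1 + 3 * qh + (9 / 4) * qh ^ 2) < 0 := by
  obtain ⟨hq0, hq1⟩ := hq
  have hq0' : qh ≠ 0 := ne_of_gt hq0
  set wr : ℝ := 3 / 2 + 2 / qh with hwrdef
  have h2q : 0 < 2 / qh := by positivity
  have hw1 : 1 < wr := by simp only [hwrdef]; linarith
  have hw0 : 0 < wr := by linarith
  have hlogw : 0 < Real.log wr := Real.log_pos hw1
  constructor
  · -- the `phaseRe` form
    have e1 : (1 : ℂ) - (qh : ℂ) / (wr : ℂ) = ((1 - qh / wr : ℝ) : ℂ) := by push_cast; ring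
    have e2 : (1 : ℂ) - (qh : ℂ) * (wr : ℂ) = ((1 - qh * wr : ℝ) : ℂ) := by push_cast; ring
    rw [phaseRe, e1, e2, Complex.norm_real, Complex.norm_real, Complex.norm_real,
      Real.norm_eq_abs, Real.norm_eq_abs, Real.norm_eq_abs]
    have hqw : qh / wr < 1 := by
      rw [div_lt_one hw0]; linarith
    have hqwpos : 0 < qh / wr := by positivity
    have habs1 : |1 - qh / wr| = 1 - qh / wr := abs_of_pos (by linarith)
    have hmul : qh * wr = 3 / 2 * qh + 2 := by
      rw [hwrdef]; field_simp
    have hqw1 : 1 < qh * wr := by rw [hmul]; linarith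
    have habs2 : |1 - qh * wr| = qh * wr - 1 := by
      rw [abs_of_neg (by linarith)]; ring
    have habs3 : |wr| = wr := abs_of_pos hw0
    rw [habs1, habs2, habs3]
    have h1 : Real.log (1 - qh / wr) < 0 := Real.log_neg (by linarith) (by linarith)
    have h2 : 0 < Real.log (qh * wr - 1) := Real.log_pos (by rw [hmul]; linarith)
    have h3 : 0 < (2 * qh / (1 - qh)) * Real.log wr := by
      apply mul_pos _ hlogw
      apply div_pos (by linarith) (by linarith)
    linarith
  · -- the explicit form
    have t1 : (2 * qh / (qh - 1)) * Real.log (3 / 2 + 2 / qh) < 0 := by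
      apply mul_neg_of_neg_of_pos _ hlogw
      exact div_neg_of_pos_of_neg (by linarith) (by linarith)
    have hfrac : 2 * qh ^ 2 / (4 + 3 * qh) < 1 := by
      rw [div_lt_one (by linarith)]; nlinarith
    have hfracpos : 0 < 2 * qh ^ 2 / (4 + 3 * qh) := by positivity
    have t2 : Real.log (1 - 2 * qh ^ 2 / (4 + 3 * qh)) < 0 :=
      Real.log_neg (by linarith) (by linarith)
    have t3 : 0 < Real.log (1 + 3 * qh + (9 / 4) * qh ^ 2) :=
      Real.log_pos (by nlinarith)
    linarith
end

section
/- For every q̂ ∈ (0,1), M(3/2 + (2/q̂)·i) < 0; explicitly, (q̂/(q̂−1))·log(9/4 + 4/q̂²) − (1/2)·log(5 − 3q̂ + (9/4)q̂²) + log(1 − (12q̂³ − 4q̂⁴)/(16 + 9q̂²)) < 0. -/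
open Complex

lemma log_abs_eq_half_log_normSq (z : ℂ) :
    Real.log ‖z‖ = Real.log (Complex.normSq z) / 2 := by
  rw [Complex.norm_def, Real.log_sqrt (Complex.normSq_nonneg z)]

/-- **Negativity of the phase where the arc `τ₃` meets the vertical segment `τ₂`.** For
every `q̂ ∈ (0,1)`, `M(3/2 + (2/q̂)i) < 0`; explicitly,
`(q̂/(q̂−1))·log(9/4 + 4/q̂²) − (1/2)·log(5 − 3q̂ + (9/4)q̂²) + log(1 − (12q̂³ − 4q̂⁴)/(16 + 9q̂²)) < 0`. -/
theorem phaseRe_neg_at_tau3_top (qh : ℝ) (hq : qh ∈ Set.Ioo (0 : ℝ) 1) :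
    phaseRe qh (3 / 2 + ((2 / qh : ℝ) : ℂ) * Complex.I) < 0 ∧
      (qh / (qh - 1)) * Real.log (9 / 4 + 4 / qh ^ 2)
        - (1 / 2) * Real.log (5 - 3 * qh + (9 / 4) * qh ^ 2)
        + Real.log (1 - (12 * qh ^ 3 - 4 * qh ^ 4) / (16 + 9 * qh ^ 2)) < 0 := by
  obtain ⟨hq0, hq1⟩ := hq
  have hqne : qh ≠ 0 := ne_of_gt hq0
  set w : ℂ := 3 / 2 + ((2 / qh : ℝ) : ℂ) * Complex.I with hw
  have hwre : w.re = 3 / 2 := by simp [hw]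
  have hwim : w.im = 2 / qh := by simp [hw]
  -- normSq computations
  have hNw : Complex.normSq w = 9 / 4 + 4 / qh ^ 2 := by
    rw [Complex.normSq_apply, hwre, hwim]; field_simp; ring
  have hNwpos : (1 : ℝ) < Complex.normSq w := by
    rw [hNw]
    have : 0 < 4 / qh ^ 2 := by positivity
    linarith
  have hwne : w ≠ 0 := by
    intro h
    rw [h, Complex.normSq_zero] at hNwpos
    linarith
  have hN1 : Complex.normSq (1 - (qh : ℂ) * w) = 5 - 3 * qh + (9 / 4) * qh ^ 2 := by
    rw [Complex.normSq_apply]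
    simp only [Complex.sub_re, Complex.sub_im, Complex.one_re, Complex.one_im,
      Complex.mul_re, Complex.mul_im, Complex.ofReal_re, Complex.ofReal_im,
      hwre, hwim]
    field_simp; ring
  have hN1gt : (1 : ℝ) < 5 - 3 * qh + (9 / 4) * qh ^ 2 := by nlinarith [sq_nonneg (3 * qh / 2 - 1)]
  have hNsub : Complex.normSq (w - (qh : ℂ)) = (3 / 2 - qh) ^ 2 + 4 / qh ^ 2 := by
    rw [Complex.normSq_apply]
    simp only [Complex.sub_re, Complex.sub_im, Complex.ofReal_re, Complex.ofReal_im,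
      hwre, hwim]
    ring
  have hNsubpos : 0 < Complex.normSq (w - (qh : ℂ)) := by
    rw [hNsub]; positivity
  have hNsublt : Complex.normSq (w - (qh : ℂ)) < Complex.normSq w := by
    rw [hNsub, hNw]; nlinarith
  -- log facts
  have hlogNw : 0 < Real.log (Complex.normSq w) :=
    Real.log_pos hNwpos
  have hlogN1 : 0 < Real.log (5 - 3 * qh + (9 / 4) * qh ^ 2) :=
    Real.log_pos hN1gt
  have hlogsub : Real.log (Complex.normSq (w - (qh : ℂ))) < Real.log (Complex.normSq w) :=
    Real.log_lt_log hNsubpos hNsublt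
  constructor
  · -- phaseRe part
    have hdiv : (1 : ℂ) - (qh : ℂ) / w = (w - (qh : ℂ)) / w := by
      field_simp
    have habsdiv : Real.log ‖1 - (qh : ℂ) / w‖ =
        Real.log (Complex.normSq (w - (qh : ℂ))) / 2 - Real.log (Complex.normSq w) / 2 := by
      rw [hdiv, norm_div, Real.log_div (by
          simp only [ne_eq, norm_eq_zero]
          intro h
          rw [h, Complex.normSq_zero] at hNsubpos; linarith)
        (by simpa using hwne), log_abs_eq_half_log_normSq, log_abs_eq_half_log_normSq]
    have hcoef : 0 < 2 * qh / (1 - qh) := by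
      apply div_pos <;> linarith
    rw [phaseRe, habsdiv, log_abs_eq_half_log_normSq, log_abs_eq_half_log_normSq, hN1]
    have h3 : 0 < 2 * qh / (1 - qh) * (Real.log (Complex.normSq w) / 2) := by positivity
    linarith
  · -- explicit part
    have hXeq : 1 - (12 * qh ^ 3 - 4 * qh ^ 4) / (16 + 9 * qh ^ 2) =
        Complex.normSq (w - (qh : ℂ)) / Complex.normSq w := by
      rw [hNsub, hNw]
      have h16 : (16 : ℝ) + 9 * qh ^ 2 ≠ 0 := by positivity
      field_simp
      ring
    have hXlt : Real.log (1 - (12 * qh ^ 3 - 4 * qh ^ 4) / (16 + 9 * qh ^ 2)) < 0 := by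
      apply Real.log_neg
      · rw [hXeq]; positivity
      · rw [hXeq]
        exact (div_lt_one (by linarith)).mpr hNsublt
    have hA : (qh / (qh - 1)) * Real.log (9 / 4 + 4 / qh ^ 2) < 0 := by
      apply mul_neg_of_neg_of_pos
      · apply div_neg_of_pos_of_neg hq0; linarith
      · rw [← hNw]; exact hlogNw
    have hB : 0 < (1 / 2) * Real.log (5 - 3 * qh + (9 / 4) * qh ^ 2) := by positivity
    linarith
end

section
/- Fix q̂ ∈ (0,1), r̃ ∈ ℝ and u > 0, and set c₀ = 2q̂(1+q̂)/(1−q̂)³. For N ∈ ℕ and X ∈ ℝ set r_N = 1 + (c₀N/2)^{−1/3}·r̃ and k_N(X) = (2q̂/(1−q̂))·N + (c₀N/2)^{1/3}·X, and (for N large enough that q̂ < r_N < 1/q̂) define f_N(X) = r_N^{k_N(X)+1} · ((1−q̂·r_N)/(1−q̂/r_N))^{N−2}, using real powers. Then, as N → ∞, f_N(X) converges to exp(−r̃³/3 + r̃·X) uniformly over X ∈ [−u, u]. -/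
open Filter Topology


lemma FrAux.log_cubic {y : ℝ} (h : |y| ≤ 1/2) :
    |Real.log (1 - y) + (y + y^2/2 + y^3/3)| ≤ 2 * |y|^4 := by
  have h1 : |y| < 1 := lt_of_le_of_lt h (by norm_num)
  have h2 := Real.abs_log_sub_add_sum_range_le h1 3
  have hs : (∑ i ∈ Finset.range 3, y ^ (i + 1) / (i + 1)) = y + y^2/2 + y^3/3 := by
    norm_num [Finset.sum_range_succ]
  rw [hs, show y + y^2/2 + y^3/3 + Real.log (1-y) = Real.log (1-y) + (y + y^2/2 + y^3/3) from by ring] at h2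
  norm_num at h2
  have h3 : (1:ℝ)/2 ≤ 1 - |y| := by linarith
  have h4 : |y|^4 / (1 - |y|) ≤ 2 * |y|^4 := by
    rw [div_le_iff₀ (by linarith)]
    nlinarith [pow_nonneg (abs_nonneg y) 4]
  linarith

lemma FrAux.poly_small {y : ℝ} (h : |y| ≤ 1) : |y + y^2/2 + y^3/3| ≤ 2*|y| := by
  have h2 : |y|^2 ≤ |y| := by nlinarith [abs_nonneg y]
  have h3 : |y|^3 ≤ |y| := by nlinarith [abs_nonneg y]
  calc |y + y^2/2 + y^3/3| ≤ |y + y^2/2| + |y^3/3| := abs_add_le _ _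
    _ ≤ |y| + |y^2/2| + |y^3/3| := by linarith [abs_add_le y (y^2/2)]
    _ = |y| + |y|^2/2 + |y|^3/3 := by rw [abs_div, abs_div, ← pow_abs, ← pow_abs]; norm_num
    _ ≤ 2*|y| := by linarith [abs_nonneg y]

lemma FrAux.log_cubic' {x : ℝ} (h : |x| ≤ 1/2) :
    |Real.log (1 + x) - (x - x^2/2 + x^3/3)| ≤ 2*|x|^4 := by
  have h' : |(-x)| ≤ 1/2 := by rwa [abs_neg]
  have := FrAux.log_cubic h'
  rw [show (1:ℝ) - -x = 1 + x from by ring] at this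
  have e : Real.log (1+x) - (x - x^2/2 + x^3/3)
      = Real.log (1+x) + (-x + (-x)^2/2 + (-x)^3/3) := by ring
  rw [e]
  simpa [abs_neg] using this

lemma FrAux.term_bound {co A K1 K2 s : ℝ} (hs : 0 < s) (h1 : |co| ≤ K1 * s^3)
    (h2 : |A| ≤ K2 / s^4) : |co * A| ≤ K1 * K2 / s := by
  rw [abs_mul]
  calc |co| * |A| ≤ (K1 * s^3) * (K2 / s^4) :=
        mul_le_mul h1 h2 (abs_nonneg _) (le_trans (abs_nonneg _) h1)
    _ = K1 * K2 / s := by field_simp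

lemma FrAux.alg_id (q rT s x y2 y3 L1 L2 L3 c0 : ℝ) (hq0 : 0 < q) (hq1 : q < 1)
    (hs : s ≠ 0) (hc0 : c0 = 2*q*(1+q)/(1-q)^3)
    (hx : x = rT/s) (hy2 : y2 = q*x/(1-q)) (hy3 : y3 = -x/(1-q)) :
    (2*q/(1-q) * (2*s^3/c0) + 1) * L1 + (2*s^3/c0 - 2) * (L2 - L3 + L1) + rT^3/3
      = ((1+q)/(1-q) * (2*s^3/c0) - 1) * (L1 - (x - x^2/2 + x^3/3))
        + (2*s^3/c0 - 2) * ((L2 + (y2 + y2^2/2 + y2^3/3)) - (L3 + (y3 + y3^2/2 + y3^3/3)))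
        + -(x - x^2/2 + x^3/3)
        + 2 * ((y2 + y2^2/2 + y2^3/3) - (y3 + y3^2/2 + y3^3/3)) := by
  have h1q : (1:ℝ) - q ≠ 0 := by intro h; nlinarith
  have h1q' : (1:ℝ) + q ≠ 0 := by positivity
  subst hx hy2 hy3 hc0
  field_simp
  ring
set_option maxHeartbeats 1000000 in
lemma FrAux.coef_bound {c d s : ℝ} (hc : 0 ≤ c) (hd : 0 ≤ d) (hs3 : 1 ≤ s^3) :
    |c * s^3 - d| ≤ (c + d) * s^3 := by
  have h1 : 0 ≤ c * s^3 := mul_nonneg hc (by linarith)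
  have h2 : 0 ≤ d * s^3 := mul_nonneg hd (by linarith)
  rw [abs_le]
  constructor <;> nlinarith

set_option maxHeartbeats 2000000 in
lemma FrAux.tendsto_F (q rT : ℝ) (hq0 : 0 < q) (hq1 : q < 1) :
    Tendsto (fun s : ℝ =>
      (2 * q / (1 - q) * (2 * s ^ 3 / (2 * q * (1 + q) / (1 - q) ^ 3)) + 1) *
          Real.log (1 + rT / s) +
        (2 * s ^ 3 / (2 * q * (1 + q) / (1 - q) ^ 3) - 2) *
          Real.log ((1 - q * (1 + rT / s)) / (1 - q / (1 + rT / s))))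
      atTop (𝓝 (-rT ^ 3 / 3)) := by
  have h1q : (0:ℝ) < 1 - q := by linarith
  set c0 : ℝ := 2*q*(1+q)/(1-q)^3 with hc0
  have hc0p : (0:ℝ) < c0 := by rw [hc0]; positivity
  clear_value c0
  set m : ℝ := (|rT| + 1) / (1 - q) with hm
  have hm0 : 0 < m := by rw [hm]; positivity
  have hmrT : (1 - q) * m = |rT| + 1 := by rw [hm]; field_simp
  set K1 : ℝ := 2*(1+q)/((1-q)*c0) + 1 with hK1
  set K2 : ℝ := 2*rT^4 with hK2
  set K3 : ℝ := 2/c0 + 2 with hK3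
  set K4 : ℝ := 4*m^4 with hK4
  set K : ℝ := K1*K2 + K3*K4 + 2*|rT| + 8*m with hK
  clear_value K1 K2 K3 K4 K m
  have key : ∀ᶠ s in atTop, ‖((2 * q / (1 - q) * (2 * s ^ 3 / c0) + 1) *
          Real.log (1 + rT / s) +
        (2 * s ^ 3 / c0 - 2) *
          Real.log ((1 - q * (1 + rT / s)) / (1 - q / (1 + rT / s)))) - (-rT ^ 3 / 3)‖
        ≤ K / s := by
    filter_upwards [eventually_ge_atTop (max 1 (2*m))] with s hs
    have hs1 : (1:ℝ) ≤ s := le_trans (le_max_left _ _) hs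
    have hs2m : 2*m ≤ s := le_trans (le_max_right _ _) hs
    have hs0 : (0:ℝ) < s := lt_of_lt_of_le one_pos hs1
    have hs3 : (1:ℝ) ≤ s^3 := one_le_pow₀ hs1
    set x : ℝ := rT / s with hxd
    set y2 : ℝ := q*x/(1-q) with hy2d
    set y3 : ℝ := -x/(1-q) with hy3d
    clear_value x y2 y3
    -- basic bounds
    have hxabs : |x| = |rT| / s := by rw [hxd, abs_div, abs_of_pos hs0]
    have hxm : |x| ≤ (1-q) * m / s := by
      rw [hxabs]; gcongr; linarith [hmrT]
    have hxhalf : |x| ≤ (1-q)/2 := by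
      calc |x| ≤ (1-q)*m/s := hxm
        _ ≤ (1-q)*m/(2*m) := by gcongr
        _ = (1-q)/2 := by field_simp
    have hx2 : |x| ≤ 1/2 := le_trans hxhalf (by linarith)
    have hy2abs : |y2| = q * |x| / (1-q) := by
      rw [hy2d, abs_div, abs_mul, abs_of_pos hq0, abs_of_pos h1q]
    have hy3abs : |y3| = |x| / (1-q) := by
      rw [hy3d, abs_div, abs_neg, abs_of_pos h1q]
    have hy3m : |y3| ≤ m / s := by
      rw [hy3abs]; rw [div_le_div_iff₀ h1q hs0] at *
      calc |x| * s ≤ ((1-q)*m/s) * s := by gcongr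
        _ = m * (1-q) := by field_simp
    have hy2m : |y2| ≤ m / s := by
      rw [hy2abs]
      calc q * |x| / (1-q) ≤ 1 * |x| / (1-q) := by gcongr
        _ = |x| / (1-q) := by ring
        _ = |y3| := hy3abs.symm
        _ ≤ m / s := hy3m
    have hmshalf : m / s ≤ 1/2 := by
      calc m / s ≤ m / (2*m) := by gcongr
        _ = 1/2 := by field_simp
    have hy2half : |y2| ≤ 1/2 := le_trans hy2m hmshalf
    have hy3half : |y3| ≤ 1/2 := le_trans hy3m hmshalf
    -- positivity facts
    have hx1 : (0:ℝ) < 1 + x := by have := abs_le.1 hx2; linarith [this.1]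
    have he2 : 1 - q * (1 + x) = (1-q) * (1 - y2) := by
      rw [hy2d]; field_simp; ring
    have he3 : 1 - q / (1 + x) = (1-q) * (1 - y3) / (1 + x) := by
      rw [hy3d]; rw [eq_div_iff hx1.ne']; field_simp; ring
    have h1y2 : (0:ℝ) < 1 - y2 := by have := abs_le.1 hy2half; linarith [this.2]
    have h1y3 : (0:ℝ) < 1 - y3 := by have := abs_le.1 hy3half; linarith [this.2]
    have h2pos : (0:ℝ) < 1 - q * (1 + x) := by rw [he2]; positivity
    have h3pos : (0:ℝ) < 1 - q / (1 + x) := by rw [he3]; positivity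
    -- splitting the log
    have hsplit : Real.log ((1 - q * (1 + x)) / (1 - q / (1 + x)))
        = Real.log (1 - y2) - Real.log (1 - y3) + Real.log (1 + x) := by
      rw [he2, he3, Real.log_div (by positivity) (by positivity),
        Real.log_mul h1q.ne' h1y2.ne', Real.log_div (by positivity) hx1.ne',
        Real.log_mul h1q.ne' h1y3.ne']
      ring
    -- Taylor estimates
    have hA := FrAux.log_cubic' hx2
    have hB := FrAux.log_cubic hy2half
    have hC := FrAux.log_cubic hy3half
    -- the algebraic identity
    have halg : ((2 * q / (1 - q) * (2 * s ^ 3 / c0) + 1) * Real.log (1 + x) +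
          (2 * s ^ 3 / c0 - 2) *
            Real.log ((1 - q * (1 + x)) / (1 - q / (1 + x)))) + rT ^ 3 / 3
        = ((1+q)/(1-q) * (2*s^3/c0) - 1) * (Real.log (1+x) - (x - x^2/2 + x^3/3))
          + (2*s^3/c0 - 2) * ((Real.log (1-y2) + (y2 + y2^2/2 + y2^3/3))
              - (Real.log (1-y3) + (y3 + y3^2/2 + y3^3/3)))
          + -(x - x^2/2 + x^3/3)
          + 2 * ((y2 + y2^2/2 + y2^3/3) - (y3 + y3^2/2 + y3^3/3)) := by
      rw [hsplit]
      exact FrAux.alg_id q rT s x y2 y3 (Real.log (1+x)) (Real.log (1-y2))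
        (Real.log (1-y3)) c0 hq0 hq1 hs0.ne' hc0 hxd hy2d hy3d
    rw [Real.norm_eq_abs, neg_div, sub_neg_eq_add, halg]
    -- term bounds
    have hx4 : 2*|x|^4 = K2 / s^4 := by
      rw [hK2, hxabs, div_pow, pow_abs, abs_of_nonneg (by positivity : (0:ℝ) ≤ rT^4)]
      ring
    have hA2 : |Real.log (1+x) - (x - x^2/2 + x^3/3)| ≤ (2*rT^4) / s^4 := by
      rw [← hK2, ← hx4]; exact hA
    have t1 : |((1+q)/(1-q) * (2*s^3/c0) - 1) * (Real.log (1+x) - (x - x^2/2 + x^3/3))|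
        ≤ K1 * K2 / s := by
      have heq : (1+q)/(1-q) * (2*s^3/c0) = (2*(1+q)/((1-q)*c0)) * s^3 := by
        field_simp
      have hco := FrAux.coef_bound (c := 2*(1+q)/((1-q)*c0)) (d := 1) (s := s)
        (by positivity) (by norm_num) hs3
      rw [← heq] at hco
      rw [hK1, hK2]
      exact FrAux.term_bound hs0 hco hA2
    have hy24 : |y2|^4 ≤ m^4 / s^4 := by
      rw [← div_pow]; exact pow_le_pow_left₀ (abs_nonneg _) hy2m 4
    have hy34 : |y3|^4 ≤ m^4 / s^4 := by
      rw [← div_pow]; exact pow_le_pow_left₀ (abs_nonneg _) hy3m 4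
    have t2 : |(2*s^3/c0 - 2) * ((Real.log (1-y2) + (y2 + y2^2/2 + y2^3/3))
          - (Real.log (1-y3) + (y3 + y3^2/2 + y3^3/3)))| ≤ K3 * K4 / s := by
      refine FrAux.term_bound hs0 ?_ ?_
      · have heq : 2*s^3/c0 = (2/c0) * s^3 := by ring
        have hco := FrAux.coef_bound (c := 2/c0) (d := 2) (s := s)
          (by positivity) (by norm_num) hs3
        rw [← heq] at hco
        rw [hK3]
        exact hco
      · calc |(Real.log (1-y2) + (y2 + y2^2/2 + y2^3/3))
              - (Real.log (1-y3) + (y3 + y3^2/2 + y3^3/3))|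
            ≤ |Real.log (1-y2) + (y2 + y2^2/2 + y2^3/3)|
              + |Real.log (1-y3) + (y3 + y3^2/2 + y3^3/3)| := abs_sub _ _
          _ ≤ 2*|y2|^4 + 2*|y3|^4 := by linarith
          _ ≤ K4 / s^4 := by
              rw [hK4, show (4:ℝ)*m^4/s^4 = 2*(m^4/s^4) + 2*(m^4/s^4) from by ring]
              linarith
    have t3 : |-(x - x^2/2 + x^3/3)| ≤ 2*|rT| / s := by
      rw [abs_neg]
      have : x - x^2/2 + x^3/3 = -((-x) + (-x)^2/2 + (-x)^3/3) := by ring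
      rw [this, abs_neg]
      calc |(-x) + (-x)^2/2 + (-x)^3/3| ≤ 2*|(-x)| := FrAux.poly_small (by rw [abs_neg]; linarith)
        _ = 2*|x| := by rw [abs_neg]
        _ = 2*|rT|/s := by rw [hxabs]; ring
    have t4 : |2 * ((y2 + y2^2/2 + y2^3/3) - (y3 + y3^2/2 + y3^3/3))| ≤ 8*m / s := by
      rw [abs_mul, abs_of_nonneg (by norm_num : (0:ℝ) ≤ 2)]
      have b2 : |y2 + y2^2/2 + y2^3/3| ≤ 2*|y2| := FrAux.poly_small (by linarith)
      have b3 : |y3 + y3^2/2 + y3^3/3| ≤ 2*|y3| := FrAux.poly_small (by linarith)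
      have := abs_sub (y2 + y2^2/2 + y2^3/3) (y3 + y3^2/2 + y3^3/3)
      have hms : |y2| ≤ m/s := hy2m
      calc 2 * |(y2 + y2^2/2 + y2^3/3) - (y3 + y3^2/2 + y3^3/3)|
          ≤ 2 * (2*|y2| + 2*|y3|) := by linarith
        _ ≤ 2 * (2*(m/s) + 2*(m/s)) := by linarith
        _ = 8*m/s := by ring
    calc |((1+q)/(1-q) * (2*s^3/c0) - 1) * (Real.log (1+x) - (x - x^2/2 + x^3/3))
          + (2*s^3/c0 - 2) * ((Real.log (1-y2) + (y2 + y2^2/2 + y2^3/3))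
              - (Real.log (1-y3) + (y3 + y3^2/2 + y3^3/3)))
          + -(x - x^2/2 + x^3/3)
          + 2 * ((y2 + y2^2/2 + y2^3/3) - (y3 + y3^2/2 + y3^3/3))|
        ≤ K1*K2/s + K3*K4/s + 2*|rT|/s + 8*m/s := by
          have a1 := abs_add_le (((1+q)/(1-q) * (2*s^3/c0) - 1) * (Real.log (1+x) - (x - x^2/2 + x^3/3)))
            ((2*s^3/c0 - 2) * ((Real.log (1-y2) + (y2 + y2^2/2 + y2^3/3))
              - (Real.log (1-y3) + (y3 + y3^2/2 + y3^3/3))))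
          have a2 := abs_add_le (((1+q)/(1-q) * (2*s^3/c0) - 1) * (Real.log (1+x) - (x - x^2/2 + x^3/3))
            + (2*s^3/c0 - 2) * ((Real.log (1-y2) + (y2 + y2^2/2 + y2^3/3))
              - (Real.log (1-y3) + (y3 + y3^2/2 + y3^3/3))))
            (-(x - x^2/2 + x^3/3))
          have a3 := abs_add_le (((1+q)/(1-q) * (2*s^3/c0) - 1) * (Real.log (1+x) - (x - x^2/2 + x^3/3))
            + (2*s^3/c0 - 2) * ((Real.log (1-y2) + (y2 + y2^2/2 + y2^3/3))
              - (Real.log (1-y3) + (y3 + y3^2/2 + y3^3/3)))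
            + -(x - x^2/2 + x^3/3))
            (2 * ((y2 + y2^2/2 + y2^3/3) - (y3 + y3^2/2 + y3^3/3)))
          linarith
      _ = K / s := by rw [hK]; field_simp
  have h0 : Tendsto (fun s : ℝ => K / s) atTop (𝓝 0) :=
    tendsto_const_nhds.div_atTop tendsto_id
  have h1 := squeeze_zero_norm' key h0
  have h2 := h1.add_const (-rT ^ 3 / 3)
  simpa using h2

lemma FrAux.unif_affine (α β : ℕ → ℝ) (a b u : ℝ)
    (hα : Tendsto α atTop (𝓝 a)) (hβ : Tendsto β atTop (𝓝 b)) :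
    TendstoUniformlyOn (fun N X => Real.exp (α N + β N * X))
      (fun X => Real.exp (a + b * X)) atTop (Set.Icc (-u) u) := by
  rw [Metric.tendstoUniformlyOn_iff]
  intro ε hε
  set M : ℝ := Real.exp (|a| + |b| * |u|) with hM
  have hM0 : 0 < M := Real.exp_pos _
  have hu1 : (0:ℝ) < 1 + |u| := by positivity
  set δ : ℝ := min (1 / (1 + |u|)) (ε / ((2*M + 1) * (1 + |u|))) with hδ
  have hδ0 : 0 < δ := lt_min (by positivity) (by positivity)
  have h1 : ∀ᶠ N in atTop, |α N - a| < δ := by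
    have := Metric.tendsto_nhds.mp hα δ hδ0
    simpa [Real.dist_eq] using this
  have h2 : ∀ᶠ N in atTop, |β N - b| < δ := by
    have := Metric.tendsto_nhds.mp hβ δ hδ0
    simpa [Real.dist_eq] using this
  filter_upwards [h1, h2] with N hN1 hN2
  intro X hX
  rw [Real.dist_eq]
  rw [Set.mem_Icc] at hX
  have hXu : |X| ≤ |u| := by
    rw [abs_le]; constructor
    · calc -|u| ≤ -u := by rw [neg_le_neg_iff]; exact le_abs_self u
        _ ≤ X := hX.1
    · exact le_trans hX.2 (le_abs_self u)
  set Δ : ℝ := (α N - a) + (β N - b) * X with hΔd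
  have hΔ : |Δ| ≤ δ * (1 + |u|) := by
    calc |Δ| ≤ |α N - a| + |β N - b| * |X| := by
          rw [hΔd]; refine (abs_add_le _ _).trans ?_; rw [abs_mul]
      _ ≤ δ + δ * |u| := by
          have : |β N - b| * |X| ≤ δ * |u| :=
            mul_le_mul hN2.le hXu (abs_nonneg _) hδ0.le
          linarith
      _ = δ * (1 + |u|) := by ring
  have hδ1 : δ * (1 + |u|) ≤ 1 := by
    calc δ * (1 + |u|) ≤ (1 / (1 + |u|)) * (1 + |u|) := by
          exact mul_le_mul_of_nonneg_right (min_le_left _ _) hu1.le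
      _ = 1 := by field_simp
  have hΔ1 : |Δ| ≤ 1 := hΔ.trans hδ1
  have hsplit : α N + β N * X = (a + b * X) + Δ := by rw [hΔd]; ring
  have hexp0 : Real.exp (α N + β N * X) = Real.exp (a + b*X) * Real.exp Δ := by
    rw [hsplit, Real.exp_add]
  have hexp : Real.exp (a + b*X) - Real.exp (α N + β N * X)
      = Real.exp (a + b*X) * (1 - Real.exp Δ) := by
    rw [hexp0]; ring
  rw [hexp, abs_mul, abs_of_pos (Real.exp_pos _)]
  have hle : Real.exp (a + b*X) ≤ M := by
    rw [hM]; apply Real.exp_le_exp.mpr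
    calc a + b*X ≤ |a| + |b*X| := by
          have := le_abs_self (b*X); have := le_abs_self a; linarith
      _ = |a| + |b| * |X| := by rw [abs_mul]
      _ ≤ |a| + |b| * |u| := by
          have := mul_le_mul_of_nonneg_left hXu (abs_nonneg b); linarith
  have habs : |1 - Real.exp Δ| ≤ 2 * |Δ| := by
    rw [abs_sub_comm]; exact Real.abs_exp_sub_one_le hΔ1
  calc Real.exp (a + b*X) * |1 - Real.exp Δ| ≤ M * (2 * |Δ|) := by
        apply mul_le_mul hle ?_ (abs_nonneg _) hM0.le
        calc |1 - Real.exp Δ| ≤ 2*|Δ| := habs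
          _ ≤ 2*|Δ| := le_refl _
    _ ≤ M * (2 * (δ * (1 + |u|))) := by
        have : 2*|Δ| ≤ 2*(δ*(1+|u|)) := by linarith
        exact mul_le_mul_of_nonneg_left this hM0.le
    _ ≤ M * (2 * (ε / ((2*M + 1) * (1 + |u|)) * (1 + |u|))) := by
        have hd2 : δ ≤ ε / ((2*M + 1) * (1 + |u|)) := min_le_right _ _
        have : δ * (1 + |u|) ≤ ε / ((2*M + 1) * (1 + |u|)) * (1 + |u|) :=
          mul_le_mul_of_nonneg_right hd2 hu1.le
        have h2' : 2 * (δ * (1+|u|)) ≤ 2 * (ε / ((2*M + 1) * (1 + |u|)) * (1 + |u|)) := by linarith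
        exact mul_le_mul_of_nonneg_left h2' hM0.le
    _ = 2*M*ε/(2*M+1) := by field_simp
    _ < ε := by
        rw [div_lt_iff₀ (by positivity)]
        nlinarith

/-- **Uniform convergence of `f^r` under KPZ critical scaling.** With
`c₀ = 2q̂(1+q̂)/(1−q̂)³`, `r_N = 1 + (c₀N/2)^{−1/3}·rTilde` and
`k_N(X) = (2q̂/(1−q̂))·N + (c₀N/2)^{1/3}·X`, the functions
`f_N(X) = r_N^{k_N(X)+1}·((1−q̂r_N)/(1−q̂/r_N))^{N−2}` converge, as `N → ∞`,
to `exp(−rTilde³/3 + rTilde·X)` uniformly over `X ∈ [−u, u]`. -/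
theorem f_r_tendstoUniformlyOn_critical_scaling
    (qh : ℝ) (hq : qh ∈ Set.Ioo (0 : ℝ) 1) (rTilde : ℝ) (u : ℝ) (hu : 0 < u) :
    TendstoUniformlyOn
      (fun (N : ℕ) (X : ℝ) =>
        let c₀ : ℝ := 2 * qh * (1 + qh) / (1 - qh) ^ 3
        let rN : ℝ := 1 + (c₀ * N / 2) ^ (-(1 / 3) : ℝ) * rTilde
        let kN : ℝ := (2 * qh / (1 - qh)) * N + (c₀ * N / 2) ^ ((1 : ℝ) / 3) * X
        rN ^ (kN + 1) * ((1 - qh * rN) / (1 - qh / rN)) ^ (N - 2))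
      (fun X => Real.exp (-rTilde ^ 3 / 3 + rTilde * X))
      atTop (Set.Icc (-u) u) := by
  obtain ⟨hq0, hq1⟩ := hq
  have h1q : (0:ℝ) < 1 - qh := by linarith
  set c0 : ℝ := 2 * qh * (1 + qh) / (1 - qh) ^ 3 with hc0
  have hc0p : 0 < c0 := by rw [hc0]; positivity
  have hstend : Tendsto (fun N : ℕ => (c0 * N / 2) ^ ((1:ℝ)/3)) atTop atTop := by
    apply (tendsto_rpow_atTop (by norm_num : (0:ℝ) < 1/3)).comp
    apply Tendsto.atTop_div_const (by norm_num : (0:ℝ) < 2)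
    exact tendsto_natCast_atTop_atTop.const_mul_atTop hc0p
  set s : ℕ → ℝ := fun N => (c0 * N / 2) ^ ((1:ℝ)/3) with hsd
  set α : ℕ → ℝ := fun N => (2*qh/(1-qh) * N + 1) * Real.log (1 + rTilde / s N)
      + ((N - 2 : ℕ) : ℝ) *
        Real.log ((1 - qh*(1 + rTilde / s N)) / (1 - qh/(1 + rTilde / s N))) with hαd
  set β : ℕ → ℝ := fun N => s N * Real.log (1 + rTilde / s N) with hβd
  have hβ : Tendsto β atTop (𝓝 rTilde) :=
    (Real.tendsto_mul_log_one_add_div_atTop rTilde).comp hstend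
  have hspos : ∀ N : ℕ, 1 ≤ N → 0 < s N := by
    intro N hN
    have hN' : (0:ℝ) < (N:ℝ) := by exact_mod_cast hN
    rw [hsd]; exact Real.rpow_pos_of_pos (by positivity) _
  have hscube : ∀ N : ℕ, (s N)^3 = c0 * N / 2 := by
    intro N
    have hb : (0:ℝ) ≤ c0 * N / 2 := by positivity
    rw [hsd]
    rw [← Real.rpow_natCast ((c0 * (N:ℝ) / 2) ^ ((1:ℝ)/3)) 3, ← Real.rpow_mul hb]
    norm_num
  have hα : Tendsto α atTop (𝓝 (-rTilde^3/3)) := by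
    have hF := (FrAux.tendsto_F qh rTilde hq0 hq1).comp hstend
    apply Filter.Tendsto.congr' ?_ hF
    filter_upwards [eventually_ge_atTop 2] with N hN2
    have hN1 : 1 ≤ N := le_trans one_le_two hN2
    have hsc := hscube N
    have hNr : 2 * (s N)^3 / c0 = (N:ℝ) := by rw [hsc]; field_simp
    have hcast : ((N - 2 : ℕ) : ℝ) = (N:ℝ) - 2 := by
      rw [Nat.cast_sub hN2]; norm_num
    show (2 * qh / (1 - qh) * (2 * (s N) ^ 3 / c0) + 1) *
          Real.log (1 + rTilde / s N) +
        (2 * (s N) ^ 3 / c0 - 2) *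
          Real.log ((1 - qh * (1 + rTilde / s N)) / (1 - qh / (1 + rTilde / s N))) = α N
    rw [hNr, ← hcast, hαd]
  have huni := FrAux.unif_affine α β (-rTilde^3/3) rTilde u hα hβ
  apply huni.congr
  filter_upwards [eventually_ge_atTop 2,
    hstend.eventually (eventually_ge_atTop (max 1 (2*((|rTilde|+1)/(1-qh)))))] with N hN2 hsN
  intro X hX
  have hsN1 : (1:ℝ) ≤ s N := le_trans (le_max_left _ _) hsN
  have hsNm : 2*((|rTilde|+1)/(1-qh)) ≤ s N := le_trans (le_max_right _ _) hsN
  have hsp : (0:ℝ) < s N := lt_of_lt_of_le one_pos hsN1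
  have hxle : |rTilde / s N| ≤ (1-qh)/2 := by
    rw [abs_div, abs_of_pos hsp, div_le_iff₀ hsp]
    have key2 : (1-qh)/2 * (2*((|rTilde|+1)/(1-qh))) = |rTilde|+1 := by field_simp
    have h3 := mul_le_mul_of_nonneg_left hsNm (by positivity : (0:ℝ) ≤ (1-qh)/2)
    rw [key2] at h3
    linarith
  have hxb := abs_le.1 hxle
  have hx1 : (0:ℝ) < 1 + rTilde / s N := by linarith [hxb.1]
  have h2p : (0:ℝ) < 1 - qh * (1 + rTilde / s N) := by
    nlinarith [mul_le_mul_of_nonneg_left hxb.2 hq0.le]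
  have h3p : (0:ℝ) < 1 - qh / (1 + rTilde / s N) := by
    rw [sub_pos, div_lt_one hx1]; linarith [hxb.1]
  have hQp : 0 < (1 - qh*(1 + rTilde/s N)) / (1 - qh/(1 + rTilde/s N)) := div_pos h2p h3p
  show Real.exp (α N + β N * X) = _
  dsimp only
  have hinv : (c0 * N / 2 : ℝ) ^ (-(1/3) : ℝ) = (s N)⁻¹ := by
    rw [Real.rpow_neg (by positivity)]
  have hrNeq : 1 + (c0 * N / 2 : ℝ) ^ (-(1/3) : ℝ) * rTilde = 1 + rTilde / s N := by
    rw [hinv, inv_mul_eq_div]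
  rw [hrNeq]
  rw [Real.rpow_def_of_pos hx1]
  rw [← Real.exp_log hQp, ← Real.exp_nat_mul, ← Real.exp_add]
  congr 1
  rw [hαd, hβd]
  dsimp only
  have hss : (c0 * N / 2 : ℝ) ^ ((1:ℝ)/3) = s N := by rw [hsd]
  rw [hss]
  ring
end

section
/- Fix q̂ ∈ (0,1), s̃ < 0 and u > 0, and set c₀ = 2q̂(1+q̂)/(1−q̂)³. For N ∈ ℕ and X ∈ ℝ set s_N = 1 + (c₀N/2)^{−1/3}·s̃ and k_N(X) = (2q̂/(1−q̂))·N + (c₀N/2)^{1/3}·X, and (for N large enough that q̂ < s_N < 1/q̂) define f_N(X) = s_N^{k_N(X)+1} · ((1−q̂·s_N)/(1−q̂/s_N))^{N−2}, using real powers. Then there exist constants C > 0, σ ∈ (0, −s̃) and N₀ ∈ ℕ such that for all N ≥ N₀ and all X ≥ −u, one has f_N(X) ≤ C·exp((s̃+σ)·X). -/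
open Real

lemma log_quadratic_abs {t : ℝ} (ht : |t| ≤ 1/2) :
    |Real.log (1+t) - (t - t^2/2)| ≤ 2*|t|^3 := by
  have h1 : |(-t)| < 1 := by rw [abs_neg]; linarith
  have h := Real.abs_log_sub_add_sum_range_le h1 2
  simp only [Finset.sum_range_succ, Finset.sum_range_zero, abs_neg] at h
  have hts : (1 : ℝ) - - t = 1 + t := by ring
  rw [hts] at h
  norm_num at h
  have h2 : -t + t^2/2 + Real.log (1+t) = Real.log (1+t) - (t - t^2/2) := by ring
  rw [h2] at h
  have h3 : |t|^3/(1-|t|) ≤ 2*|t|^3 := by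
    rw [div_le_iff₀ (by linarith [abs_nonneg t] : (0:ℝ) < 1 - |t|)]
    nlinarith [abs_nonneg t, pow_nonneg (abs_nonneg t) 3]
  linarith

set_option maxHeartbeats 1000000 in
/-- **Uniform exponential bound on `f^s` under KPZ critical scaling.** With
`c₀ = 2q̂(1+q̂)/(1−q̂)³`, `s_N = 1 + (c₀N/2)^{−1/3}·s̃` (`s̃ < 0`) and
`k_N(X) = (2q̂/(1−q̂))·N + (c₀N/2)^{1/3}·X`, the functions
`f_N(X) = s_N^{k_N(X)+1}·((1−q̂s_N)/(1−q̂/s_N))^{N−2}` satisfy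
`f_N(X) ≤ C·exp((s̃+σ)X)` for all `N ≥ N₀` and `X ≥ −u`, for some `C > 0`,
`σ ∈ (0, −s̃)` and `N₀ ∈ ℕ`. -/
theorem f_s_uniform_bound_critical_scaling
    (qh : ℝ) (hq : qh ∈ Set.Ioo (0 : ℝ) 1) (sTilde : ℝ) (hst : sTilde < 0)
    (u : ℝ) (hu : 0 < u) :
    ∃ C : ℝ, 0 < C ∧ ∃ σ : ℝ, σ ∈ Set.Ioo (0 : ℝ) (-sTilde) ∧ ∃ N₀ : ℕ,
      ∀ N : ℕ, N₀ ≤ N → ∀ X : ℝ, -u ≤ X →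
        (let c₀ : ℝ := 2 * qh * (1 + qh) / (1 - qh) ^ 3
         let sN : ℝ := 1 + (c₀ * N / 2) ^ (-(1 / 3) : ℝ) * sTilde
         let kN : ℝ := (2 * qh / (1 - qh)) * N + (c₀ * N / 2) ^ ((1 : ℝ) / 3) * X
         sN ^ (kN + 1) * ((1 - qh * sN) / (1 - qh / sN)) ^ (N - 2))
        ≤ C * Real.exp ((sTilde + σ) * X) := by
  obtain ⟨hq0, hq1⟩ := hq
  have hq1' : (0:ℝ) < 1 - qh := by linarith only [hq1]
  have hstpos : 0 < -sTilde := by linarith only [hst]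
  set α : ℝ := 2 * qh / (1 - qh) with hαdef
  clear_value α
  have hαpos : 0 < α := by rw [hαdef]; positivity
  set c₀ : ℝ := 2 * qh * (1 + qh) / (1 - qh) ^ 3 with hc₀def
  clear_value c₀
  have hc₀pos : (0:ℝ) < c₀ := by rw [hc₀def]; positivity
  have hc₀ne : c₀ ≠ 0 := ne_of_gt hc₀pos
  set iq : ℝ := 1/(1-qh)^3 with hiqdef
  clear_value iq
  have hiqpos : 0 < iq := by rw [hiqdef]; positivity
  set M : ℝ := 2*(α+1) + 4*iq with hMdef
  clear_value M
  have hMpos : 0 < M := by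
    rw [hMdef]; linarith only [hαpos, hiqpos]
  set K : ℝ := 2*M*(-sTilde)^3/c₀ + (3/2)*(-sTilde)*u with hKdef
  clear_value K
  refine ⟨Real.exp K, Real.exp_pos _, -sTilde/2,
    Set.mem_Ioo.mpr ⟨by linarith only [hstpos], by linarith only [hstpos]⟩, ?_⟩
  set B : ℝ := 2*(-sTilde)/(1-qh) + 2*(-sTilde) + 1 with hBdef
  clear_value B
  have hBaux : (0:ℝ) ≤ 2*(-sTilde)/(1-qh) := by positivity
  have hBpos : 0 < B := by rw [hBdef]; linarith only [hBaux, hstpos]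
  have hB1 : 1 ≤ B := by rw [hBdef]; linarith only [hBaux, hstpos]
  refine ⟨⌈2*B^3/c₀⌉₊ + 1, ?_⟩
  intro N hN X hX
  dsimp only
  -- basic facts about N
  have hN1 : 1 ≤ N := le_trans (Nat.le_add_left 1 _) hN
  have hNpos : (0:ℝ) < N := by exact_mod_cast hN1
  have hNne : (N:ℝ) ≠ 0 := ne_of_gt hNpos
  have hNB : B^3 ≤ c₀ * N / 2 := by
    have h1 : 2*B^3/c₀ ≤ (N:ℝ) := by
      refine le_trans (Nat.le_ceil _) ?_
      exact_mod_cast le_trans (Nat.le_add_right _ 1) hN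
    rw [div_le_iff₀ hc₀pos] at h1
    nlinarith only [h1]
  set P : ℝ := c₀ * N / 2 with hPdef
  clear_value P
  have hPpos : 0 < P := by rw [hPdef]; positivity
  set b : ℝ := P ^ ((1:ℝ)/3) with hbdef
  clear_value b
  have hbpos : 0 < b := by rw [hbdef]; exact Real.rpow_pos_of_pos hPpos _
  have hbB : B ≤ b := by
    have h1 : (B^3 : ℝ) ^ ((1:ℝ)/3) ≤ P ^ ((1:ℝ)/3) := by
      refine Real.rpow_le_rpow (by positivity) ?_ (by norm_num)
      exact hNB
    have h2 : (B^3 : ℝ) ^ ((1:ℝ)/3) = B := by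
      rw [← Real.rpow_natCast B 3, ← Real.rpow_mul hBpos.le]
      norm_num
    rw [hbdef]; rwa [h2] at h1
  have hb1 : 1 ≤ b := le_trans hB1 hbB
  have hb3 : b ^ (3:ℕ) = P := by
    rw [hbdef, ← Real.rpow_natCast (P ^ ((1:ℝ)/3)) 3, ← Real.rpow_mul hPpos.le]
    norm_num
  -- epsilon
  set ε : ℝ := sTilde / b with hεdef
  clear_value ε
  have hεneg : ε < 0 := by
    rw [hεdef]; exact div_neg_of_neg_of_pos hst hbpos
  have hεabs : |ε| = (-sTilde)/b := by
    rw [abs_of_neg hεneg, hεdef]; ring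
  have hεsmall : |ε| ≤ (1-qh)/2 := by
    rw [hεabs, div_le_iff₀ hbpos]
    have hs1 : 2*(-sTilde)/(1-qh) ≤ b := by
      refine le_trans ?_ hbB
      rw [hBdef]; linarith only [hstpos]
    rw [div_le_iff₀ hq1'] at hs1
    linarith only [hs1]
  have hεhalf : |ε| ≤ 1/2 := le_trans hεsmall (by linarith only [hq0])
  have hεlb : -(1:ℝ)/2 ≤ ε := by linarith only [neg_abs_le ε, hεhalf]
  -- sN
  set sN : ℝ := 1 + ε with hsNdef
  clear_value sN
  have hsNeq : (1:ℝ) + P ^ (-(1/3) : ℝ) * sTilde = sN := by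
    rw [hsNdef, hεdef, hbdef, Real.rpow_neg hPpos.le]
    rw [inv_mul_eq_div]
  rw [hsNeq]
  have hsNpos : 0 < sN := by rw [hsNdef]; linarith only [hεlb]
  have hsNlt1 : sN < 1 := by rw [hsNdef]; linarith only [hεneg]
  have hsNle1 : sN ≤ 1 := hsNlt1.le
  have hεub : -ε ≤ (1-qh)/2 := by
    rw [← abs_of_neg hεneg]; exact hεsmall
  have hqsN : qh < sN := by rw [hsNdef]; linarith only [hεub, hq1]
  have h1ε : (0:ℝ) < 1 + ε := by rw [← hsNdef]; exact hsNpos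
  -- R
  set R : ℝ := (1 - qh * sN) / (1 - qh / sN) with hRdef
  clear_value R
  have hd2pos : 0 < 1 - qh / sN := by
    have h := (div_lt_one hsNpos).mpr hqsN
    linarith only [h]
  have hqdiv : qh ≤ qh / sN := by
    rw [le_div_iff₀ hsNpos]; exact mul_le_of_le_one_right hq0.le hsNle1
  have hqmul : qh * sN ≤ qh := mul_le_of_le_one_right hq0.le hsNle1
  have hR1 : 1 ≤ R := by
    rw [hRdef, le_div_iff₀ hd2pos]; linarith only [hqdiv, hqmul]
  have hRpos : 0 < R := lt_of_lt_of_le one_pos hR1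
  have hRpow : R ^ (N - 2) ≤ R ^ N := pow_le_pow_right₀ hR1 (Nat.sub_le N 2)
  -- split the rpow
  have hsplit : sN ^ (α * (N:ℝ) + b * X + 1) =
      sN ^ (α * (N:ℝ)) * sN ^ (b * X) * sN := by
    rw [Real.rpow_add hsNpos, Real.rpow_add hsNpos, Real.rpow_one]
  -- bounds on log sN
  have hbε : b * ε = sTilde := by rw [hεdef]; field_simp
  have hlogsqa := log_quadratic_abs hεhalf
  have hlog_le : Real.log sN ≤ ε := by
    have h := Real.log_le_sub_one_of_pos hsNpos
    rw [hsNdef] at h ⊢; linarith only [h]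
  have hε3 : |ε|^3 ≤ (1/2) * ε^2 := by
    have h1 : |ε|^3 = |ε| * |ε|^2 := by ring
    have h2 : |ε|^2 = ε^2 := sq_abs ε
    rw [h1, h2]
    exact mul_le_mul_of_nonneg_right hεhalf (sq_nonneg ε)
  have hlog_ge : ε - (3/2) * ε^2 ≤ Real.log sN := by
    have h1 : -(2*|ε|^3) ≤ Real.log (1+ε) - (ε - ε^2/2) := (abs_le.mp hlogsqa).1
    rw [hsNdef]; linarith only [h1, hε3]
  set L : ℝ := b * Real.log sN with hLdef
  clear_value L
  have hL_le : L ≤ sTilde := by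
    rw [hLdef, ← hbε]
    exact mul_le_mul_of_nonneg_left hlog_le hbpos.le
  have hbst : (3/2)*(-sTilde) ≤ b := by
    refine le_trans ?_ hbB
    rw [hBdef]; linarith only [hBaux, hstpos]
  have hL_ge : 2*sTilde ≤ L := by
    have h1 : b * (ε - (3/2)*ε^2) ≤ L := by
      rw [hLdef]; exact mul_le_mul_of_nonneg_left hlog_ge hbpos.le
    have h2 : b * ε^2 = sTilde^2 / b := by
      rw [hεdef]; field_simp
    have h3 : sTilde^2 / b ≤ (2/3)*(-sTilde) := by
      rw [div_le_iff₀ hbpos]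
      have h4 := mul_le_mul_of_nonneg_left hbst hstpos.le
      linarith only [h4]
    linarith only [h1, h2, h3, hbε]
  -- step B : the X-dependent factor
  have hstepB : sN ^ (b * X) ≤
      Real.exp ((3/2)*(-sTilde)*u) * Real.exp ((sTilde + -sTilde/2) * X) := by
    rw [Real.rpow_def_of_pos hsNpos, ← Real.exp_add, Real.exp_le_exp]
    have hLX : Real.log sN * (b * X) = L * X := by rw [hLdef]; ring
    rw [hLX]
    have hc_le : L - sTilde/2 ≤ sTilde/2 := by linarith only [hL_le]
    have hc_ge : (3/2)*sTilde ≤ L - sTilde/2 := by linarith only [hL_ge]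
    have hXu : 0 ≤ X + u := by linarith only [hX]
    have hprod : (L - sTilde/2) * (X + u) ≤ 0 :=
      mul_nonpos_of_nonpos_of_nonneg (by linarith only [hc_le, hst]) hXu
    have hcu : -(L - sTilde/2)*u ≤ (3/2)*(-sTilde)*u := by
      have h5 := mul_le_mul_of_nonneg_right hc_ge hu.le
      linarith only [h5]
    linarith only [hprod, hcu]
  -- decomposition of log R
  set v : ℝ := -(qh*ε)/(1-qh) with hvdef
  clear_value v
  set w : ℝ := ε/(1-qh) with hwdef
  clear_value w
  have hvpos : 0 < v := by
    rw [hvdef]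
    apply div_pos _ hq1'
    nlinarith only [hεneg, hq0]
  have hwneg : w < 0 := by
    rw [hwdef]; exact div_neg_of_neg_of_pos hεneg hq1'
  have hwabs : |w| = |ε|/(1-qh) := by
    rw [hwdef, abs_div, abs_of_pos hq1']
  have hvabs : |v| = qh*|ε|/(1-qh) := by
    rw [hvdef, abs_div, abs_of_pos hq1', abs_neg, abs_mul, abs_of_pos hq0]
  have hwhalf : |w| ≤ 1/2 := by
    rw [hwabs, div_le_iff₀ hq1']
    linarith only [hεsmall]
  have hvhalf : |v| ≤ 1/2 := by
    rw [hvabs, div_le_iff₀ hq1']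
    nlinarith only [hεsmall, hq0, hq1, abs_nonneg ε]
  have h1v : (0:ℝ) < 1 + v := by linarith only [hvpos]
  have h1w : (0:ℝ) < 1 + w := by linarith only [neg_abs_le w, hwhalf]
  have hd2' : (0:ℝ) < 1 - qh/(1+ε) := by rw [← hsNdef]; exact hd2pos
  have h1w' : (0:ℝ) < 1 + ε/(1-qh) := by rw [← hwdef]; exact h1w
  have hRval : R = (1+v)*(1+ε)/(1+w) := by
    rw [hRdef, hsNdef, hvdef, hwdef]
    rw [div_eq_div_iff (ne_of_gt hd2') (ne_of_gt h1w')]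
    field_simp
    ring
  have hlogR : Real.log R = Real.log (1+v) + Real.log (1+ε) - Real.log (1+w) := by
    rw [hRval, Real.log_div (by positivity) (ne_of_gt h1w),
      Real.log_mul (ne_of_gt h1v) (ne_of_gt h1ε)]
  -- the per-unit key estimate
  have hEε := log_quadratic_abs hεhalf
  have hEv := log_quadratic_abs hvhalf
  have hEw := log_quadratic_abs hwhalf
  have hup_ε : Real.log (1+ε) ≤ (ε - ε^2/2) + 2*|ε|^3 := by
    linarith only [(abs_le.mp hEε).2]
  have hup_v : Real.log (1+v) ≤ (v - v^2/2) + 2*|v|^3 := by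
    linarith only [(abs_le.mp hEv).2]
  have hlow_w : (w - w^2/2) - 2*|w|^3 ≤ Real.log (1+w) := by
    linarith only [(abs_le.mp hEw).1]
  have hid : (α+1)*(ε - ε^2/2) + (v - v^2/2) - (w - w^2/2) = 0 := by
    rw [hαdef, hvdef, hwdef]
    field_simp
    ring
  have hiq : |ε|^3/(1-qh)^3 = iq*|ε|^3 := by rw [hiqdef]; ring
  have hv3 : |v|^3 ≤ iq*|ε|^3 := by
    have hq : qh*|ε| ≤ |ε| := by nlinarith only [abs_nonneg ε, hq1, hq0]
    calc |v|^3 = (qh*|ε|)^3/(1-qh)^3 := by rw [hvabs, div_pow]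
      _ ≤ |ε|^3/(1-qh)^3 := by
          apply (div_le_div_iff_of_pos_right (by positivity)).mpr
          exact pow_le_pow_left₀ (by positivity) hq 3
      _ = iq*|ε|^3 := hiq
  have hw3 : |w|^3 = iq*|ε|^3 := by rw [hwabs, div_pow, hiq]
  have hα1 : (0:ℝ) ≤ α + 1 := by linarith only [hαpos]
  have key : (α+1)*Real.log (1+ε) + Real.log (1+v) - Real.log (1+w) ≤ M*|ε|^3 := by
    have s1 : (α+1)*Real.log (1+ε) ≤ (α+1)*((ε - ε^2/2) + 2*|ε|^3) :=
      mul_le_mul_of_nonneg_left hup_ε hα1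
    rw [hMdef]
    linarith only [s1, hup_v, hlow_w, hid, hv3, hw3]
  -- step A : the constant factor
  have hb3' : b^(3:ℕ) = c₀*(N:ℝ)/2 := by rw [hb3, hPdef]
  have core : Real.log sN * (α*(N:ℝ)) + (N:ℝ) * Real.log R ≤ 2*M*(-sTilde)^3/c₀ := by
    have e1 : Real.log sN * (α*(N:ℝ)) + (N:ℝ) * Real.log R
        = (N:ℝ) * ((α+1)*Real.log (1+ε) + Real.log (1+v) - Real.log (1+w)) := by
      rw [hlogR, hsNdef]; ring
    rw [e1]
    have h2 : (N:ℝ) * ((α+1)*Real.log (1+ε) + Real.log (1+v) - Real.log (1+w))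
        ≤ (N:ℝ) * (M*|ε|^3) := mul_le_mul_of_nonneg_left key hNpos.le
    have h3 : (N:ℝ) * (M*|ε|^3) = 2*M*(-sTilde)^3/c₀ := by
      rw [hεabs, div_pow, hb3']
      field_simp
    rw [h3] at h2
    exact h2
  have hstepA : sN ^ (α*(N:ℝ)) * R^N ≤ Real.exp (2*M*(-sTilde)^3/c₀) := by
    have hRN : (R:ℝ)^N = Real.exp ((N:ℝ) * Real.log R) := by
      rw [← Real.log_pow, Real.exp_log (pow_pos hRpos N)]
    rw [Real.rpow_def_of_pos hsNpos, hRN, ← Real.exp_add, Real.exp_le_exp]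
    exact core
  -- assembly
  have g2 : (0:ℝ) ≤ sN ^ (b*X) := Real.rpow_nonneg hsNpos.le _
  have g0 : (0:ℝ) ≤ sN ^ (α*(N:ℝ)) := Real.rpow_nonneg hsNpos.le _
  calc sN ^ (α * (N:ℝ) + b*X + 1) * R ^ (N-2)
      = (sN ^ (α*(N:ℝ)) * R^(N-2)) * sN ^ (b*X) * sN := by rw [hsplit]; ring
    _ ≤ (sN ^ (α*(N:ℝ)) * R^N) * sN ^ (b*X) * 1 := by
        have g1 : sN ^ (α*(N:ℝ)) * R^(N-2) ≤ sN ^ (α*(N:ℝ)) * R^N :=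
          mul_le_mul_of_nonneg_left hRpow g0
        exact mul_le_mul (mul_le_mul g1 le_rfl g2
            (mul_nonneg g0 (pow_nonneg hRpos.le N))) hsNle1 hsNpos.le
            (mul_nonneg (mul_nonneg g0 (pow_nonneg hRpos.le N)) g2)
    _ ≤ Real.exp (2*M*(-sTilde)^3/c₀) *
          (Real.exp ((3/2)*(-sTilde)*u) * Real.exp ((sTilde + -sTilde/2) * X)) * 1 := by
        rw [mul_one, mul_one]
        exact mul_le_mul hstepA hstepB g2 (Real.exp_pos _).le
    _ = Real.exp K * Real.exp ((sTilde + -sTilde/2) * X) := by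
        rw [mul_one, hKdef, Real.exp_add]
        ring
end
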